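/- arXiv:1107.3293 — 3 statements merged into one kernel-verified Lean document; each statement's English description precedes it below -/
import Mathlib

section
/- Suppose that π_t > 0 almost surely for every t ≥ 0, and define B_t = exp(∫_0^t σ_s²/π_s ds) ∈ (0, ∞]. Then for every t ≥ 0 one has the identity E[π_t B_t] = E[ B_t · ∫_t^∞ σ_s² ds ], as an equality of values in [0, ∞]. -/
open MeasureTheory Filter
open scoped ENNReal

/-- Joint measurability of a progressively measurable process. -/
lemma progMeasurable_joint {Ω : Type*} {m0 : MeasurableSpace Ω} (ℱ : Filtration ℝ m0)
    (σ : ℝ → Ω → ℝ) (h : ProgMeasurable ℱ σ) :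
    Measurable fun p : ℝ × Ω => σ p.1 p.2 := by
  have key : ∀ n : ℕ, Measurable fun p : ℝ × Ω => σ (min p.1 n) p.2 := by
    intro n
    have h1 : Measurable[(Subtype.instMeasurableSpace).prod (ℱ n)]
        fun p : Set.Iic (n : ℝ) × Ω => σ p.1 p.2 := (h n).measurable
    have hle : (Subtype.instMeasurableSpace :
        MeasurableSpace (Set.Iic (n : ℝ))).prod (ℱ n)
        ≤ Subtype.instMeasurableSpace.prod m0 :=
      sup_le_sup le_rfl (MeasurableSpace.comap_mono (ℱ.le n))
    have h1' : Measurable fun p : Set.Iic (n : ℝ) × Ω => σ p.1 p.2 :=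
      h1.mono hle le_rfl
    have he : Measurable fun p : ℝ × Ω =>
        ((⟨min p.1 n, Set.mem_Iic.2 (min_le_right _ _)⟩ : Set.Iic (n : ℝ)), p.2) :=
      Measurable.prodMk (Measurable.subtype_mk (measurable_fst.min measurable_const))
        measurable_snd
    exact h1'.comp he
  apply measurable_of_tendsto_metrizable key
  rw [tendsto_pi_nhds]
  intro p
  refine tendsto_const_nhds.congr' ?_
  filter_upwards [eventually_ge_atTop (⌈p.1⌉₊)] with n hn
  have : min p.1 (n : ℝ) = p.1 := min_eq_left (le_trans (Nat.le_ceil _) (Nat.cast_le.2 hn))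
  simp [this]

/-- Measurability of the time integral up to `t` of a function which is jointly measurable
on `Iic t × Ω`. -/
lemma measurable_lintegral_Ioc {Ω : Type*} {m : MeasurableSpace Ω} {t : ℝ}
    (f : ℝ → Ω → ℝ≥0∞)
    (hf : Measurable fun p : Set.Iic t × Ω => f p.1 p.2) :
    Measurable fun ω => ∫⁻ s in Set.Ioc (0 : ℝ) t, f s ω := by
  have he : Measurable fun q : Ω × ℝ =>
      ((⟨min q.2 t, Set.mem_Iic.2 (min_le_right _ _)⟩ : Set.Iic t), q.1) :=
    Measurable.prodMk (Measurable.subtype_mk (measurable_snd.min measurable_const))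
      measurable_fst
  have hG : Measurable fun q : Ω × ℝ => f (min q.2 t) q.1 := hf.comp he
  have hrw : ∀ ω, ∫⁻ s in Set.Ioc (0 : ℝ) t, f s ω
      = ∫⁻ s in Set.Ioc (0 : ℝ) t, f (min s t) ω := by
    intro ω
    refine setLIntegral_congr_fun measurableSet_Ioc (fun s hs => ?_)
    rw [min_eq_left hs.2]
  simp_rw [hrw]
  exact hG.lintegral_prod_right'

/-- Tower property for the Lebesgue integral against a nonnegative `m`-measurable weight. -/
lemma lintegral_mul_ofReal_condexp {Ω : Type*} {m m0 : MeasurableSpace Ω} (hm : m ≤ m0)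
    (μ : Measure Ω) [IsFiniteMeasure μ] {f : Ω → ℝ≥0∞} (hf : Measurable[m] f)
    {g : Ω → ℝ} (hg : Integrable g μ) (hgnn : 0 ≤ᵐ[μ] g) :
    ∫⁻ ω, f ω * ENNReal.ofReal ((μ[g|m]) ω) ∂μ = ∫⁻ ω, f ω * ENNReal.ofReal (g ω) ∂μ := by
  have hfm0 : Measurable f := hf.mono hm le_rfl
  have hce : Measurable fun ω => ENNReal.ofReal ((μ[g|m]) ω) :=
    ENNReal.measurable_ofReal.comp ((stronglyMeasurable_condExp.mono hm).measurable)
  have hgm : AEMeasurable (fun ω => ENNReal.ofReal (g ω)) μ :=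
    ENNReal.measurable_ofReal.comp_aemeasurable hg.aemeasurable
  set ν₁ := μ.withDensity fun ω => ENNReal.ofReal ((μ[g|m]) ω) with hν₁
  set ν₂ := μ.withDensity fun ω => ENNReal.ofReal (g ω) with hν₂
  have h1 : ∫⁻ ω, f ω * ENNReal.ofReal ((μ[g|m]) ω) ∂μ = ∫⁻ ω, f ω ∂ν₁ := by
    rw [lintegral_withDensity_eq_lintegral_mul μ hce hfm0]
    exact lintegral_congr fun ω => (mul_comm _ _)
  have h2 : ∫⁻ ω, f ω * ENNReal.ofReal (g ω) ∂μ = ∫⁻ ω, f ω ∂ν₂ := by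
    rw [lintegral_withDensity_eq_lintegral_mul₀ hgm hfm0.aemeasurable]
    exact lintegral_congr fun ω => (mul_comm _ _)
  have htrim : ν₁.trim hm = ν₂.trim hm := by
    refine @MeasureTheory.Measure.ext Ω m _ _ fun s hs => ?_
    rw [trim_measurableSet_eq hm hs, trim_measurableSet_eq hm hs, hν₁, hν₂,
      withDensity_apply _ (hm s hs), withDensity_apply _ (hm s hs)]
    have e1 : ∫⁻ ω in s, ENNReal.ofReal ((μ[g|m]) ω) ∂μ
        = ENNReal.ofReal (∫ ω in s, (μ[g|m]) ω ∂μ) :=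
      (ofReal_integral_eq_lintegral_ofReal (integrable_condExp.integrableOn)
        (ae_restrict_of_ae (condExp_nonneg hgnn))).symm
    have e2 : ∫⁻ ω in s, ENNReal.ofReal (g ω) ∂μ
        = ENNReal.ofReal (∫ ω in s, g ω ∂μ) :=
      (ofReal_integral_eq_lintegral_ofReal (hg.integrableOn)
        (ae_restrict_of_ae hgnn)).symm
    rw [e1, e2, setIntegral_condExp hm hg hs]
  calc ∫⁻ ω, f ω * ENNReal.ofReal ((μ[g|m]) ω) ∂μ
      = ∫⁻ ω, f ω ∂ν₁ := h1
    _ = ∫⁻ ω, f ω ∂(ν₁.trim hm) := (lintegral_trim hm hf).symm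
    _ = ∫⁻ ω, f ω ∂(ν₂.trim hm) := by rw [htrim]
    _ = ∫⁻ ω, f ω ∂ν₂ := lintegral_trim hm hf
    _ = ∫⁻ ω, f ω * ENNReal.ofReal (g ω) ∂μ := h2.symm

/-- Let `σ` be progressively measurable with `E[∫_0^∞ σ_s² ds] < ∞` and let
`π_t = E_t[∫_t^∞ σ_s² ds]` (a progressively measurable version) with `π_t > 0` a.s. for each
`t ≥ 0`. Define `B_t = exp(∫_0^t σ_s²/π_s ds) ∈ (0, ∞]` (with value `∞` when the exponent is
infinite). Then for every `t ≥ 0`, as an equality in `[0, ∞]`,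
`E[π_t B_t] = E[B_t · ∫_t^∞ σ_s² ds]`. -/
theorem deflated_money_market_tower_identity
    {Ω : Type*} {m0 : MeasurableSpace Ω} (μ : Measure Ω) [IsProbabilityMeasure μ]
    (ℱ : Filtration ℝ m0) (σ : ℝ → Ω → ℝ) (hσprog : ProgMeasurable ℱ σ)
    (hσint : ∫⁻ ω, (∫⁻ s in Set.Ioi (0 : ℝ), ENNReal.ofReal ((σ s ω) ^ 2)) ∂μ < ⊤)
    (π : ℝ → Ω → ℝ) (hπprog : ProgMeasurable ℱ π)
    (hπver : ∀ t : ℝ, 0 ≤ t → π t =ᵐ[μ] μ[fun ω => ∫ s in Set.Ioi t, (σ s ω) ^ 2|ℱ t])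
    (hπpos : ∀ t : ℝ, 0 ≤ t → ∀ᵐ ω ∂μ, 0 < π t ω)
    (B : ℝ → Ω → ℝ≥0∞)
    (hB : ∀ t ω, B t ω =
      if (∫⁻ s in Set.Ioc (0 : ℝ) t, ENNReal.ofReal ((σ s ω) ^ 2 / π s ω)) = ⊤ then ⊤
      else ENNReal.ofReal (Real.exp
        ((∫⁻ s in Set.Ioc (0 : ℝ) t, ENNReal.ofReal ((σ s ω) ^ 2 / π s ω)).toReal))) :
    ∀ t : ℝ, 0 ≤ t →
      ∫⁻ ω, ENNReal.ofReal (π t ω) * B t ω ∂μ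
        = ∫⁻ ω, B t ω * (∫⁻ s in Set.Ioi t, ENNReal.ofReal ((σ s ω) ^ 2)) ∂μ := by
  intro t ht
  have hm : ℱ t ≤ m0 := ℱ.le t
  set g : Ω → ℝ := fun ω => ∫ s in Set.Ioi t, (σ s ω) ^ 2 with hgdef
  -- joint measurability of σ
  have hσj : Measurable fun p : ℝ × Ω => σ p.1 p.2 := progMeasurable_joint ℱ σ hσprog
  have hσsec : ∀ ω, Measurable fun s => (σ s ω) ^ 2 := fun ω =>
    (((hσj.comp ((measurable_prodMk_right : Measurable fun s : ℝ => (s, ω))))).pow_const 2)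
  -- measurability of B t with respect to ℱ t
  have hL : Measurable[ℱ t] fun ω =>
      ∫⁻ s in Set.Ioc (0 : ℝ) t, ENNReal.ofReal ((σ s ω) ^ 2 / π s ω) := by
    refine measurable_lintegral_Ioc (m := ℱ t) _ ?_
    have hσt := (hσprog t).measurable
    have hπt := (hπprog t).measurable
    exact ENNReal.measurable_ofReal.comp ((hσt.pow_const 2).div hπt)
  have hBmeas : Measurable[ℱ t] (B t) := by
    have : B t = (fun x : ℝ≥0∞ => if x = ⊤ then ⊤ else ENNReal.ofReal (Real.exp x.toReal)) ∘
        (fun ω => ∫⁻ s in Set.Ioc (0 : ℝ) t, ENNReal.ofReal ((σ s ω) ^ 2 / π s ω)) := by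
      funext ω; exact hB t ω
    rw [this]
    refine Measurable.comp ?_ hL
    refine Measurable.ite (measurableSet_singleton ⊤ : MeasurableSet {x : ℝ≥0∞ | x = ⊤})
      measurable_const ?_
    exact ENNReal.measurable_ofReal.comp (Real.measurable_exp.comp ENNReal.measurable_toReal)
  -- nonnegativity of g
  have hgnn : ∀ ω, 0 ≤ g ω := fun ω => integral_nonneg fun s => sq_nonneg _
  -- measurability of inner lintegrals
  have hout : Measurable fun ω => ∫⁻ s in Set.Ioi t, ENNReal.ofReal ((σ s ω) ^ 2) := by
    have : Measurable fun q : Ω × ℝ => ENNReal.ofReal ((σ q.2 q.1) ^ 2) :=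
      ENNReal.measurable_ofReal.comp
        ((hσj.comp (measurable_snd.prodMk measurable_fst)).pow_const 2)
    exact this.lintegral_prod_right'
  have hout0 : Measurable fun ω => ∫⁻ s in Set.Ioi (0 : ℝ), ENNReal.ofReal ((σ s ω) ^ 2) := by
    have : Measurable fun q : Ω × ℝ => ENNReal.ofReal ((σ q.2 q.1) ^ 2) :=
      ENNReal.measurable_ofReal.comp
        ((hσj.comp (measurable_snd.prodMk measurable_fst)).pow_const 2)
    exact this.lintegral_prod_right'
  -- a.e. finiteness and the identity ofReal g = lintegral
  have hmono : ∀ ω, (∫⁻ s in Set.Ioi t, ENNReal.ofReal ((σ s ω) ^ 2))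
      ≤ ∫⁻ s in Set.Ioi (0 : ℝ), ENNReal.ofReal ((σ s ω) ^ 2) := fun ω =>
    lintegral_mono' (Measure.restrict_mono (Set.Ioi_subset_Ioi ht) le_rfl) le_rfl
  have hfin : ∀ᵐ ω ∂μ, (∫⁻ s in Set.Ioi t, ENNReal.ofReal ((σ s ω) ^ 2)) < ⊤ := by
    filter_upwards [ae_lt_top hout0 hσint.ne] with ω hω
    exact lt_of_le_of_lt (hmono ω) hω
  have hae : ∀ᵐ ω ∂μ, ENNReal.ofReal (g ω)
      = ∫⁻ s in Set.Ioi t, ENNReal.ofReal ((σ s ω) ^ 2) := by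
    filter_upwards [hfin] with ω hω
    have hint : Integrable (fun s => (σ s ω) ^ 2) (volume.restrict (Set.Ioi t)) := by
      refine ⟨(hσsec ω).aestronglyMeasurable, ?_⟩
      rw [HasFiniteIntegral]
      calc ∫⁻ s in Set.Ioi t, (‖(σ s ω) ^ 2‖₊ : ℝ≥0∞)
          = ∫⁻ s in Set.Ioi t, ENNReal.ofReal ((σ s ω) ^ 2) :=
            lintegral_congr fun s => Real.enorm_eq_ofReal (sq_nonneg _)
        _ < ⊤ := hω
    exact ofReal_integral_eq_lintegral_ofReal hint (ae_of_all _ fun s => sq_nonneg _)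
  -- integrability of g
  have hgmeas : AEStronglyMeasurable g μ := by
    have : StronglyMeasurable fun p : Ω × ℝ => (σ p.2 p.1) ^ 2 :=
      ((hσj.comp (measurable_snd.prodMk measurable_fst)).pow_const 2).stronglyMeasurable
    exact this.integral_prod_right'.aestronglyMeasurable
  have hgint : Integrable g μ := by
    refine ⟨hgmeas, ?_⟩
    rw [HasFiniteIntegral]
    have hb : ∀ᵐ ω ∂μ, (‖g ω‖₊ : ℝ≥0∞)
        ≤ ∫⁻ s in Set.Ioi (0 : ℝ), ENNReal.ofReal ((σ s ω) ^ 2) := by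
      filter_upwards [hae] with ω hω
      calc (‖g ω‖₊ : ℝ≥0∞) = ENNReal.ofReal (g ω) := Real.enorm_eq_ofReal (hgnn ω)
        _ = ∫⁻ s in Set.Ioi t, ENNReal.ofReal ((σ s ω) ^ 2) := hω
        _ ≤ ∫⁻ s in Set.Ioi (0 : ℝ), ENNReal.ofReal ((σ s ω) ^ 2) := hmono ω
    exact lt_of_le_of_lt (lintegral_mono_ae hb) hσint
  -- main computation
  calc ∫⁻ ω, ENNReal.ofReal (π t ω) * B t ω ∂μ
      = ∫⁻ ω, B t ω * ENNReal.ofReal ((μ[g|ℱ t]) ω) ∂μ := by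
        refine lintegral_congr_ae ?_
        filter_upwards [hπver t ht] with ω hω
        rw [hω, mul_comm]
    _ = ∫⁻ ω, B t ω * ENNReal.ofReal (g ω) ∂μ :=
        lintegral_mul_ofReal_condexp hm μ hBmeas hgint (ae_of_all _ hgnn)
    _ = ∫⁻ ω, B t ω * (∫⁻ s in Set.Ioi t, ENNReal.ofReal ((σ s ω) ^ 2)) ∂μ := by
        refine lintegral_congr_ae ?_
        filter_upwards [hae] with ω hω
        rw [hω]
end

section
/- Suppose that π_s > 0 almost surely for every s ≥ 0, and define B_s = exp(∫_0^s σ_u²/π_u du) ∈ (0, ∞]. Then for every t ≥ 0 one has, as an equality of values in [0, ∞], E[ ∫_0^t σ_s² B_s · (∫_s^∞ σ_u² du)/π_s ds ] = E[ ∫_0^t σ_s² B_s ds ]. -/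
open MeasureTheory Filter
open scoped ENNReal

set_option maxHeartbeats 1000000

open MeasureTheory Filter
open scoped ENNReal

namespace DMMaux

variable {Ω : Type*}

lemma min_meas {m : MeasurableSpace Ω} {f : ℝ → Ω → ℝ} {s : ℝ}
    (hf : StronglyMeasurable[Subtype.instMeasurableSpace.prod m]
      (fun p : Set.Iic s × Ω => f p.1 p.2)) :
    Measurable (fun p : ℝ × Ω => f (min p.1 s) p.2) := by
  have h1 := hf.measurable
  have hφ : Measurable (fun p : ℝ × Ω =>
      ((⟨min p.1 s, Set.mem_Iic.2 (min_le_right _ _)⟩ : Set.Iic s), p.2)) :=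
    ((measurable_fst.min measurable_const).subtype_mk).prodMk measurable_snd
  exact h1.comp hφ

lemma uncurry_meas {m0 : MeasurableSpace Ω} (ℱ : Filtration ℝ m0) {f : ℝ → Ω → ℝ}
    (hf : ProgMeasurable ℱ f) : Measurable (Function.uncurry f) := by
  have h1 : ∀ n : ℕ, Measurable (fun p : ℝ × Ω => f (min p.1 (n : ℝ)) p.2) := by
    intro n
    have h2 : @Measurable _ _
        ((inferInstance : MeasurableSpace ℝ).prod (ℱ (n : ℝ))) _
        (fun p : ℝ × Ω => f (min p.1 (n : ℝ)) p.2) :=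
      min_meas (m := ℱ (n : ℝ)) (hf (n : ℝ))
    refine h2.mono ?_ le_rfl
    exact sup_le_sup le_rfl (MeasurableSpace.comap_mono (ℱ.le (n : ℝ)))
  have heq : Function.uncurry f
      = fun p : ℝ × Ω => (fun q : (ℝ × Ω) × ℕ => f (min q.1.1 (q.2 : ℝ)) q.1.2)
        (p, ⌈p.1⌉₊) := by
    funext p
    simp [Function.uncurry, min_eq_left (Nat.le_ceil p.1)]
  rw [heq]
  exact (measurable_from_prod_countable_left (f := fun q : (ℝ × Ω) × ℕ => f (min q.1.1 (q.2 : ℝ)) q.1.2) fun n => h1 n).comp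
    (measurable_id.prodMk ((Nat.ceil_mono.measurable).comp measurable_fst))

end DMMaux

namespace DMMaux

lemma param_meas_Ioi {m : MeasurableSpace Ω} {h : ℝ × Ω → ℝ≥0∞} (hh : Measurable h) :
    Measurable fun p : ℝ × Ω => ∫⁻ u in Set.Ioi p.1, h (u, p.2) := by
  set F : (ℝ × Ω) × ℝ → ℝ≥0∞ :=
    fun q => if q.1.1 < q.2 then h (q.2, q.1.2) else 0 with hF_def
  have hF : Measurable F :=
    Measurable.ite (measurableSet_lt measurable_fst.fst measurable_snd)
      (hh.comp (measurable_snd.prodMk measurable_fst.snd)) measurable_const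
  have h2 := hF.lintegral_prod_right' (ν := (volume : Measure ℝ))
  have heq : (fun p : ℝ × Ω => ∫⁻ u in Set.Ioi p.1, h (u, p.2))
      = fun p : ℝ × Ω => ∫⁻ u, F (p, u) := by
    funext p
    rw [← lintegral_indicator measurableSet_Ioi]
    congr 1
  rw [heq]
  exact h2

lemma param_meas_Ioc {m : MeasurableSpace Ω} {h : ℝ × Ω → ℝ≥0∞} (hh : Measurable h) :
    Measurable fun p : ℝ × Ω => ∫⁻ u in Set.Ioc 0 p.1, h (u, p.2) := by
  set F : (ℝ × Ω) × ℝ → ℝ≥0∞ :=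
    fun q => if 0 < q.2 ∧ q.2 ≤ q.1.1 then h (q.2, q.1.2) else 0 with hF_def
  have hF : Measurable F := by
    refine Measurable.ite ?_ (hh.comp (measurable_snd.prodMk measurable_fst.snd))
      measurable_const
    exact MeasurableSet.inter (measurableSet_lt measurable_const measurable_snd)
      (measurableSet_le measurable_snd measurable_fst.fst)
  have h2 := hF.lintegral_prod_right' (ν := (volume : Measure ℝ))
  have heq : (fun p : ℝ × Ω => ∫⁻ u in Set.Ioc 0 p.1, h (u, p.2))
      = fun p : ℝ × Ω => ∫⁻ u, F (p, u) := by
    funext p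
    rw [← lintegral_indicator measurableSet_Ioc]
    congr 1
    funext u
    simp only [hF_def, Set.indicator_apply, Set.mem_Ioc]
  rw [heq]
  exact h2

end DMMaux

namespace DMMaux

lemma key_slice {m0 : MeasurableSpace Ω} (μ : Measure Ω) [IsProbabilityMeasure μ]
    (ℱ : Filtration ℝ m0) (σ π : ℝ → Ω → ℝ)
    (hσprog : ProgMeasurable ℱ σ) (hπprog : ProgMeasurable ℱ π)
    (hσint : ∫⁻ ω, (∫⁻ u in Set.Ioi (0 : ℝ), ENNReal.ofReal ((σ u ω) ^ 2)) ∂μ < ⊤)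
    (s : ℝ) (hs : 0 < s)
    (hπver : π s =ᵐ[μ] μ[fun ω => ∫ u in Set.Ioi s, (σ u ω) ^ 2|ℱ s])
    (hπpos : ∀ᵐ ω ∂μ, 0 < π s ω)
    (B : Ω → ℝ≥0∞) (hBmeas : Measurable[ℱ s] B) :
    ∫⁻ ω, ENNReal.ofReal ((σ s ω) ^ 2) * B ω *
        ((∫⁻ u in Set.Ioi s, ENNReal.ofReal ((σ u ω) ^ 2)) / ENNReal.ofReal (π s ω)) ∂μ
      = ∫⁻ ω, ENNReal.ofReal ((σ s ω) ^ 2) * B ω ∂μ := by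
  have hm : ℱ s ≤ m0 := ℱ.le s
  haveI : SigmaFinite (μ.trim hm) := inferInstance
  have hσu : Measurable (Function.uncurry σ) := DMMaux.uncurry_meas ℱ hσprog
  have hσs2 : Measurable[ℱ s] fun ω => ENNReal.ofReal ((σ s ω) ^ 2) :=
    ENNReal.measurable_ofReal.comp ((ProgMeasurable.stronglyAdapted hσprog s).measurable.pow_const 2)
  set X : Ω → ℝ≥0∞ := fun ω => ∫⁻ u in Set.Ioi s, ENNReal.ofReal ((σ u ω) ^ 2) with hX_def
  have hh : Measurable fun q : ℝ × Ω => ENNReal.ofReal ((σ q.1 q.2) ^ 2) :=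
    ENNReal.measurable_ofReal.comp (hσu.pow_const 2)
  have hXmeas : Measurable X := by
    have h1 := DMMaux.param_meas_Ioi (m := m0) hh
    have h2 := h1.comp (measurable_prodMk_left (x := s))
    exact h2
  have hXle : ∀ ω, X ω ≤ ∫⁻ u in Set.Ioi (0 : ℝ), ENNReal.ofReal ((σ u ω) ^ 2) := fun ω =>
    lintegral_mono_set (Set.Ioi_subset_Ioi hs.le)
  have hXint : ∫⁻ ω, X ω ∂μ ≠ ⊤ := ((lintegral_mono hXle).trans_lt hσint).ne
  have hXfin : ∀ᵐ ω ∂μ, X ω < ⊤ := ae_lt_top hXmeas hXint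
  set f : Ω → ℝ := fun ω => ∫ u in Set.Ioi s, (σ u ω) ^ 2 with hf_def
  have hfX : ∀ ω, f ω = (X ω).toReal := by
    intro ω
    have hmeasu : Measurable fun u : ℝ => σ u ω := by
      have := hσu.comp (measurable_prodMk_right (y := ω))
      exact this
    have hmeasu2 : Measurable fun u : ℝ => (σ u ω) ^ 2 := hmeasu.pow_const 2
    simp only [hf_def, hX_def]
    rw [integral_eq_lintegral_of_nonneg_ae (ae_of_all _ fun u => sq_nonneg (σ u ω))
      hmeasu2.aestronglyMeasurable]
  have hfeq : f = fun ω => (X ω).toReal := funext hfX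
  have hfmeas : Measurable f := by rw [hfeq]; exact hXmeas.ennreal_toReal
  have hfnn : ∀ ω, 0 ≤ f ω := fun ω => (hfX ω) ▸ ENNReal.toReal_nonneg
  have hfint : Integrable f μ := by
    refine ⟨hfmeas.aestronglyMeasurable, ?_⟩
    rw [hasFiniteIntegral_iff_ofReal (ae_of_all _ hfnn)]
    refine lt_of_le_of_lt (lintegral_mono fun ω => ?_) hXint.lt_top
    rw [hfX ω]
    exact ENNReal.ofReal_toReal_le
  have hofX : (fun ω => ENNReal.ofReal (f ω)) =ᵐ[μ] X :=
    hXfin.mono fun ω hω => by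
      show ENNReal.ofReal (f ω) = X ω
      rw [hfX ω, ENNReal.ofReal_toReal hω.ne]
  have hπint : Integrable (π s) μ := integrable_condExp.congr hπver.symm
  have hπnn : 0 ≤ᵐ[μ] π s := hπpos.mono fun ω h => h.le
  have hset : ∀ A : Set Ω, MeasurableSet[ℱ s] A →
      ∫⁻ ω in A, X ω ∂μ = ∫⁻ ω in A, ENNReal.ofReal (π s ω) ∂μ := by
    intro A hA
    calc ∫⁻ ω in A, X ω ∂μ = ∫⁻ ω in A, ENNReal.ofReal (f ω) ∂μ :=
          lintegral_congr_ae (ae_restrict_of_ae hofX.symm)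
      _ = ENNReal.ofReal (∫ ω in A, f ω ∂μ) :=
          (ofReal_integral_eq_lintegral_ofReal hfint.restrict
            (ae_restrict_of_ae (ae_of_all _ hfnn))).symm
      _ = ENNReal.ofReal (∫ ω in A, (μ[f|ℱ s]) ω ∂μ) := by
          rw [setIntegral_condExp hm hfint hA]
      _ = ENNReal.ofReal (∫ ω in A, π s ω ∂μ) := by
          rw [integral_congr_ae (ae_restrict_of_ae hπver)]
      _ = ∫⁻ ω in A, ENNReal.ofReal (π s ω) ∂μ :=
          ofReal_integral_eq_lintegral_ofReal hπint.restrict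
            (ae_restrict_of_ae hπnn)
  set π' : Ω → ℝ≥0∞ := fun ω => ENNReal.ofReal (π s ω) with hπ'_def
  have hπ'm0 : Measurable π' :=
    ENNReal.measurable_ofReal.comp ((ProgMeasurable.stronglyAdapted hπprog s).measurable.mono hm le_rfl)
  have htrim : (μ.withDensity X).trim hm = (μ.withDensity π').trim hm := by
    refine @MeasureTheory.Measure.ext Ω (ℱ s) _ _ fun A hA => ?_
    rw [trim_measurableSet_eq hm hA, trim_measurableSet_eq hm hA,
      withDensity_apply _ (hm A hA), withDensity_apply _ (hm A hA)]
    exact hset A hA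
  set g : Ω → ℝ≥0∞ :=
    fun ω => ENNReal.ofReal ((σ s ω) ^ 2) * B ω * (ENNReal.ofReal (π s ω))⁻¹ with hg_def
  have hgm : Measurable[ℱ s] g :=
    (hσs2.mul hBmeas).mul
      ((ENNReal.measurable_ofReal.comp (ProgMeasurable.stronglyAdapted hπprog s).measurable)).inv
  have hg0 : Measurable g := hgm.mono hm le_rfl
  calc ∫⁻ ω, ENNReal.ofReal ((σ s ω) ^ 2) * B ω * (X ω / ENNReal.ofReal (π s ω)) ∂μ
      = ∫⁻ ω, X ω * g ω ∂μ := by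
        refine lintegral_congr fun ω => ?_
        simp only [hg_def, div_eq_mul_inv]
        ring
    _ = ∫⁻ ω, g ω ∂(μ.withDensity X) := by
        rw [lintegral_withDensity_eq_lintegral_mul μ hXmeas hg0]; rfl
    _ = ∫⁻ ω, g ω ∂((μ.withDensity X).trim hm) := (lintegral_trim hm hgm).symm
    _ = ∫⁻ ω, g ω ∂((μ.withDensity π').trim hm) := by rw [htrim]
    _ = ∫⁻ ω, g ω ∂(μ.withDensity π') := lintegral_trim hm hgm
    _ = ∫⁻ ω, π' ω * g ω ∂μ := by
        rw [lintegral_withDensity_eq_lintegral_mul μ hπ'm0 hg0]; rfl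
    _ = ∫⁻ ω, ENNReal.ofReal ((σ s ω) ^ 2) * B ω ∂μ := by
        refine lintegral_congr_ae (hπpos.mono fun ω hω => ?_)
        have h0 : ENNReal.ofReal (π s ω) ≠ 0 := (ENNReal.ofReal_pos.mpr hω).ne'
        have ht : ENNReal.ofReal (π s ω) ≠ ⊤ := ENNReal.ofReal_ne_top
        simp only [hπ'_def, hg_def]
        rw [mul_comm, mul_assoc, ENNReal.inv_mul_cancel h0 ht, mul_one]

end DMMaux

/-- Let `σ` be progressively measurable with `E[∫_0^∞ σ_s² ds] < ∞` and let
`π_s = E_s[∫_s^∞ σ_u² du]` (a progressively measurable version) with `π_s > 0` a.s. for each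
`s ≥ 0`. Define `B_s = exp(∫_0^s σ_u²/π_u du) ∈ (0, ∞]` (with value `∞` when the exponent is
infinite). Then for every `t ≥ 0`, as an equality in `[0, ∞]`,
`E[∫_0^t σ_s² B_s (∫_s^∞ σ_u² du)/π_s ds] = E[∫_0^t σ_s² B_s ds]`. -/
theorem deflated_money_market_key_identity
    {Ω : Type*} {m0 : MeasurableSpace Ω} (μ : Measure Ω) [IsProbabilityMeasure μ]
    (ℱ : Filtration ℝ m0) (σ : ℝ → Ω → ℝ) (hσprog : ProgMeasurable ℱ σ)
    (hσint : ∫⁻ ω, (∫⁻ s in Set.Ioi (0 : ℝ), ENNReal.ofReal ((σ s ω) ^ 2)) ∂μ < ⊤)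
    (π : ℝ → Ω → ℝ) (hπprog : ProgMeasurable ℱ π)
    (hπver : ∀ s : ℝ, 0 ≤ s → π s =ᵐ[μ] μ[fun ω => ∫ u in Set.Ioi s, (σ u ω) ^ 2|ℱ s])
    (hπpos : ∀ s : ℝ, 0 ≤ s → ∀ᵐ ω ∂μ, 0 < π s ω)
    (B : ℝ → Ω → ℝ≥0∞)
    (hB : ∀ s ω, B s ω =
      if (∫⁻ u in Set.Ioc (0 : ℝ) s, ENNReal.ofReal ((σ u ω) ^ 2 / π u ω)) = ⊤ then ⊤
      else ENNReal.ofReal (Real.exp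
        ((∫⁻ u in Set.Ioc (0 : ℝ) s, ENNReal.ofReal ((σ u ω) ^ 2 / π u ω)).toReal))) :
    ∀ t : ℝ, 0 ≤ t →
      ∫⁻ ω, (∫⁻ s in Set.Ioc (0 : ℝ) t, ENNReal.ofReal ((σ s ω) ^ 2) * B s ω
          * ((∫⁻ u in Set.Ioi s, ENNReal.ofReal ((σ u ω) ^ 2)) / ENNReal.ofReal (π s ω))) ∂μ
        = ∫⁻ ω, (∫⁻ s in Set.Ioc (0 : ℝ) t, ENNReal.ofReal ((σ s ω) ^ 2) * B s ω) ∂μ := by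
  intro t ht
  have hσu : Measurable (Function.uncurry σ) := DMMaux.uncurry_meas ℱ hσprog
  have hπu : Measurable (Function.uncurry π) := DMMaux.uncurry_meas ℱ hπprog
  set φ : ℝ≥0∞ → ℝ≥0∞ :=
    fun x => if x = ⊤ then ⊤ else ENNReal.ofReal (Real.exp x.toReal) with hφ_def
  have hφm : Measurable φ := by
    refine Measurable.ite ?_ measurable_const
      (ENNReal.measurable_ofReal.comp (Real.measurable_exp.comp ENNReal.measurable_toReal))
    rw [Set.setOf_eq_eq_singleton]
    exact measurableSet_singleton ⊤
  -- joint measurability (w.r.t. m0)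
  have hσj : Measurable fun p : ℝ × Ω => ENNReal.ofReal ((σ p.1 p.2) ^ 2) :=
    ENNReal.measurable_ofReal.comp (hσu.pow_const 2)
  have hπju : Measurable fun p : ℝ × Ω => π p.1 p.2 := hπu
  have hhB : Measurable fun q : ℝ × Ω => ENNReal.ofReal ((σ q.1 q.2) ^ 2 / π q.1 q.2) :=
    ENNReal.measurable_ofReal.comp ((hσu.pow_const 2).div hπju)
  have hGj : Measurable fun p : ℝ × Ω =>
      ∫⁻ u in Set.Ioc (0 : ℝ) p.1, ENNReal.ofReal ((σ u p.2) ^ 2 / π u p.2) := by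
    have h1 := DMMaux.param_meas_Ioc (m := m0) hhB
    exact h1
  have hBj : Measurable fun p : ℝ × Ω => B p.1 p.2 := by
    have heq : (fun p : ℝ × Ω => B p.1 p.2) = φ ∘ (fun p : ℝ × Ω =>
        ∫⁻ u in Set.Ioc (0 : ℝ) p.1, ENNReal.ofReal ((σ u p.2) ^ 2 / π u p.2)) := by
      funext p
      rw [hB p.1 p.2]
      rfl
    rw [heq]
    exact hφm.comp hGj
  have hXj : Measurable fun p : ℝ × Ω =>
      ∫⁻ u in Set.Ioi p.1, ENNReal.ofReal ((σ u p.2) ^ 2) := by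
    have h1 := DMMaux.param_meas_Ioi (m := m0) hσj
    exact h1
  have hπj : Measurable fun p : ℝ × Ω => ENNReal.ofReal (π p.1 p.2) :=
    ENNReal.measurable_ofReal.comp hπu
  have hF1 : Measurable fun p : ℝ × Ω => ENNReal.ofReal ((σ p.1 p.2) ^ 2) * B p.1 p.2
      * ((∫⁻ u in Set.Ioi p.1, ENNReal.ofReal ((σ u p.2) ^ 2)) / ENNReal.ofReal (π p.1 p.2)) :=
    (hσj.mul hBj).mul (hXj.div hπj)
  have hF2 : Measurable fun p : ℝ × Ω => ENNReal.ofReal ((σ p.1 p.2) ^ 2) * B p.1 p.2 :=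
    hσj.mul hBj
  have hT1 : AEMeasurable (Function.uncurry fun (ω : Ω) (s : ℝ) =>
      ENNReal.ofReal ((σ s ω) ^ 2) * B s ω
        * ((∫⁻ u in Set.Ioi s, ENNReal.ofReal ((σ u ω) ^ 2)) / ENNReal.ofReal (π s ω)))
      (μ.prod (volume.restrict (Set.Ioc (0 : ℝ) t))) :=
    (hF1.comp measurable_swap).aemeasurable
  have hT2 : AEMeasurable (Function.uncurry fun (ω : Ω) (s : ℝ) =>
      ENNReal.ofReal ((σ s ω) ^ 2) * B s ω)
      (μ.prod (volume.restrict (Set.Ioc (0 : ℝ) t))) :=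
    (hF2.comp measurable_swap).aemeasurable
  calc ∫⁻ ω, (∫⁻ s in Set.Ioc (0 : ℝ) t, ENNReal.ofReal ((σ s ω) ^ 2) * B s ω
          * ((∫⁻ u in Set.Ioi s, ENNReal.ofReal ((σ u ω) ^ 2)) / ENNReal.ofReal (π s ω))) ∂μ
      = ∫⁻ s in Set.Ioc (0 : ℝ) t, ∫⁻ ω, ENNReal.ofReal ((σ s ω) ^ 2) * B s ω
          * ((∫⁻ u in Set.Ioi s, ENNReal.ofReal ((σ u ω) ^ 2)) / ENNReal.ofReal (π s ω)) ∂μ :=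
        lintegral_lintegral_swap hT1
    _ = ∫⁻ s in Set.Ioc (0 : ℝ) t, ∫⁻ ω, ENNReal.ofReal ((σ s ω) ^ 2) * B s ω ∂μ := by
        refine setLIntegral_congr_fun measurableSet_Ioc (fun s hs => ?_)
        -- B s is ℱ s-measurable
        have hBms : Measurable[ℱ s] (B s) := by
          have hσm := DMMaux.min_meas (m := ℱ s) (hσprog s)
          have hπm := DMMaux.min_meas (m := ℱ s) (hπprog s)
          have hhm := ENNReal.measurable_ofReal.comp ((hσm.pow_const 2).div hπm)
          have hGm := (DMMaux.param_meas_Ioc (m := ℱ s) hhm).comp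
            (measurable_prodMk_left (x := s))
          have hGeq : (fun ω => ∫⁻ u in Set.Ioc (0 : ℝ) s,
                ENNReal.ofReal ((σ u ω) ^ 2 / π u ω))
              = fun ω => ∫⁻ u in Set.Ioc (0 : ℝ) s,
                ENNReal.ofReal ((σ (min u s) ω) ^ 2 / π (min u s) ω) := by
            funext ω
            refine setLIntegral_congr_fun measurableSet_Ioc (fun u hu => ?_)
            rw [min_eq_left hu.2]
          have heq : B s = φ ∘ (fun ω => ∫⁻ u in Set.Ioc (0 : ℝ) s,
              ENNReal.ofReal ((σ u ω) ^ 2 / π u ω)) := by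
            funext ω
            rw [hB s ω]
            rfl
          rw [heq, hGeq]
          exact hφm.comp hGm
        exact DMMaux.key_slice μ ℱ σ π hσprog hπprog hσint s hs.1
          (hπver s hs.1.le) (hπpos s hs.1.le) (B s) hBms
    _ = ∫⁻ ω, (∫⁻ s in Set.Ioc (0 : ℝ) t, ENNReal.ofReal ((σ s ω) ^ 2) * B s ω) ∂μ :=
        (lintegral_lintegral_swap hT2).symm
end

section
/- Let (π_t)_{t≥0} and (r_t)_{t≥0} be nonnegative progressively measurable processes such that π_t and ∫_0^t π_s r_s ds are integrable for each t, the process M_t = π_t + ∫_0^t π_s r_s ds is a martingale with respect to (F_t), and for each t ≥ 0 one has lim_{T→∞} E_t[π_T] = 0 almost surely. Then for each t ≥ 0 the pricing kernel admits the representation π_t = E_t[ ∫_t^∞ π_s r_s ds ] almost surely. -/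
open MeasureTheory Filter Set

namespace PricingKernelAux

section PricingKernelAux
variable {Ω : Type*} {m0 : MeasurableSpace Ω} (μ : Measure Ω) [IsProbabilityMeasure μ]
variable (ℱ : Filtration ℝ m0) (π r : ℝ → Ω → ℝ)

lemma aux_prod_mono {m m' : MeasurableSpace Ω} (h : m ≤ m') :
    (borel ℝ).prod m ≤ (borel ℝ).prod m' :=
  sup_le_sup le_rfl (MeasurableSpace.comap_mono h)

variable (ℱ : Filtration ℝ m0) (π r : ℝ → Ω → ℝ)

lemma aux_clamp_sm (hπprog : ProgMeasurable ℱ π) (T : ℝ) :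
    StronglyMeasurable[(borel ℝ).prod (ℱ T)] fun p : ℝ × Ω => π (min p.1 T) p.2 := by
  have h := hπprog T
  have hφ : @Measurable (ℝ × Ω) (Set.Iic T × Ω) ((borel ℝ).prod (ℱ T))
      (Subtype.instMeasurableSpace.prod (ℱ T))
      (fun p : ℝ × Ω => ((⟨min p.1 T, Set.mem_Iic.mpr (min_le_right _ _)⟩ : Set.Iic T), p.2)) := by
    refine Measurable.prodMk ?_ measurable_snd
    exact Measurable.subtype_mk (Measurable.min measurable_fst measurable_const)
  exact h.comp_measurable hφ

lemma aux_clamp_sm2 (hπprog : ProgMeasurable ℱ π) (hrprog : ProgMeasurable ℱ r) (T : ℝ) :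
    StronglyMeasurable[(ℱ T).prod (borel ℝ)]
      fun q : Ω × ℝ => π (min q.2 T) q.1 * r (min q.2 T) q.1 := by
  have hsw : @Measurable (Ω × ℝ) (ℝ × Ω) ((ℱ T).prod (borel ℝ)) ((borel ℝ).prod (ℱ T))
      Prod.swap := @measurable_swap _ _ (ℱ T) (borel ℝ)
  exact ((aux_clamp_sm ℱ π hπprog T).comp_measurable hsw).mul
    ((aux_clamp_sm ℱ r hrprog T).comp_measurable hsw)

lemma aux_f_sm (hπprog : ProgMeasurable ℱ π) (hrprog : ProgMeasurable ℱ r) (T : ℝ) :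
    StronglyMeasurable[ℱ T] fun ω => ∫ s in Set.Ioc (0:ℝ) T, π s ω * r s ω := by
  have h := @MeasureTheory.StronglyMeasurable.integral_prod_right' Ω ℝ ℝ (ℱ T) (borel ℝ)
    (volume.restrict (Set.Ioc (0:ℝ) T)) _ _ _ _
    (aux_clamp_sm2 ℱ π r hπprog hrprog T)
  have : (fun ω => ∫ s in Set.Ioc (0:ℝ) T, π s ω * r s ω)
      = fun ω => ∫ s in Set.Ioc (0:ℝ) T, π (min s T) ω * r (min s T) ω := by
    funext ω
    refine setIntegral_congr_fun measurableSet_Ioc (fun s hs => ?_)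
    rw [min_eq_left hs.2]
  rw [this]
  exact h

lemma aux_F_meas (hπprog : ProgMeasurable ℱ π) (hrprog : ProgMeasurable ℱ r) (T : ℝ) :
    Measurable[ℱ T] fun ω => ∫⁻ s in Set.Ioc (0:ℝ) T, ENNReal.ofReal (π s ω * r s ω) := by
  have hm : Measurable[(ℱ T).prod (borel ℝ)]
      fun q : Ω × ℝ => ENNReal.ofReal (π (min q.2 T) q.1 * r (min q.2 T) q.1) :=
    ENNReal.measurable_ofReal.comp (aux_clamp_sm2 ℱ π r hπprog hrprog T).measurable
  have h := @Measurable.lintegral_prod_right' Ω ℝ (ℱ T) (borel ℝ)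
    (volume.restrict (Set.Ioc (0:ℝ) T)) _ _ hm
  have : (fun ω => ∫⁻ s in Set.Ioc (0:ℝ) T, ENNReal.ofReal (π s ω * r s ω))
      = fun ω => ∫⁻ s in Set.Ioc (0:ℝ) T, ENNReal.ofReal (π (min s T) ω * r (min s T) ω) := by
    funext ω
    refine setLIntegral_congr_fun measurableSet_Ioc (fun s hs => ?_)
    rw [min_eq_left hs.2]
  rw [this]
  exact h

lemma aux_setint
    (hπint : ∀ t : ℝ, Integrable (π t) μ)
    (hMint : ∀ t : ℝ, Integrable (fun ω => ∫ s in Set.Ioc (0 : ℝ) t, π s ω * r s ω) μ)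
    (hmart : ∀ s t : ℝ, 0 ≤ s → s ≤ t →
      μ[fun ω => π t ω + ∫ u in Set.Ioc (0 : ℝ) t, π u ω * r u ω|ℱ s]
        =ᵐ[μ] fun ω => π s ω + ∫ u in Set.Ioc (0 : ℝ) s, π u ω * r u ω)
    (s₀ T : ℝ) (h0 : 0 ≤ s₀) (hsT : s₀ ≤ T) (A : Set Ω) (hA : MeasurableSet[ℱ s₀] A) :
    ∫ ω in A, (π T ω + ∫ u in Set.Ioc (0 : ℝ) T, π u ω * r u ω) ∂μ
      = ∫ ω in A, (π s₀ ω + ∫ u in Set.Ioc (0 : ℝ) s₀, π u ω * r u ω) ∂μ := by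
  have hint : Integrable (fun ω => π T ω + ∫ u in Set.Ioc (0 : ℝ) T, π u ω * r u ω) μ :=
    (hπint T).add (hMint T)
  calc ∫ ω in A, (π T ω + ∫ u in Set.Ioc (0 : ℝ) T, π u ω * r u ω) ∂μ
      = ∫ ω in A, (μ[fun ω => π T ω + ∫ u in Set.Ioc (0 : ℝ) T, π u ω * r u ω|ℱ s₀]) ω ∂μ :=
        (setIntegral_condExp (ℱ.le s₀) hint hA).symm
    _ = ∫ ω in A, (π s₀ ω + ∫ u in Set.Ioc (0 : ℝ) s₀, π u ω * r u ω) ∂μ :=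
        setIntegral_congr_ae (ℱ.le s₀ _ hA) ((hmart s₀ T h0 hsT).mono fun ω hω _ => hω)

lemma aux_exp_const
    (hπint : ∀ t : ℝ, Integrable (π t) μ)
    (hMint : ∀ t : ℝ, Integrable (fun ω => ∫ s in Set.Ioc (0 : ℝ) t, π s ω * r s ω) μ)
    (hmart : ∀ s t : ℝ, 0 ≤ s → s ≤ t →
      μ[fun ω => π t ω + ∫ u in Set.Ioc (0 : ℝ) t, π u ω * r u ω|ℱ s]
        =ᵐ[μ] fun ω => π s ω + ∫ u in Set.Ioc (0 : ℝ) s, π u ω * r u ω)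
    (T : ℝ) (hT : 0 ≤ T) :
    ∫ ω, (π T ω + ∫ u in Set.Ioc (0 : ℝ) T, π u ω * r u ω) ∂μ = ∫ ω, π 0 ω ∂μ := by
  have h := aux_setint μ ℱ π r hπint hMint hmart 0 T le_rfl hT Set.univ MeasurableSet.univ
  simp only [setIntegral_univ, Set.Ioc_self, Measure.restrict_empty, integral_zero_measure,
    add_zero] at h
  exact h

lemma aux_maximal
    (hπprog : ProgMeasurable ℱ π) (hrprog : ProgMeasurable ℱ r)
    (hπnn : ∀ t ω, 0 ≤ π t ω) (hrnn : ∀ t ω, 0 ≤ r t ω)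
    (hπint : ∀ t : ℝ, Integrable (π t) μ)
    (hMint : ∀ t : ℝ, Integrable (fun ω => ∫ s in Set.Ioc (0 : ℝ) t, π s ω * r s ω) μ)
    (hmart : ∀ s t : ℝ, 0 ≤ s → s ≤ t →
      μ[fun ω => π t ω + ∫ u in Set.Ioc (0 : ℝ) t, π u ω * r u ω|ℱ s]
        =ᵐ[μ] fun ω => π s ω + ∫ u in Set.Ioc (0 : ℝ) s, π u ω * r u ω)
    (s : Finset ℚ) (hs : ∀ q ∈ s, (0:ℚ) ≤ q) (ε : ℝ) (hε : 0 < ε) :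
    ε * (μ {ω | ∃ q ∈ s, ε ≤ π (q:ℝ) ω + ∫ u in Set.Ioc (0 : ℝ) (q:ℝ), π u ω * r u ω}).toReal
      ≤ ∫ ω, π 0 ω ∂μ := by
  classical
  set M : ℚ → Ω → ℝ := fun q ω => π (q:ℝ) ω + ∫ u in Set.Ioc (0 : ℝ) (q:ℝ), π u ω * r u ω with hM
  have hMsm : ∀ q : ℚ, StronglyMeasurable[ℱ (q:ℝ)] (M q) := fun q =>
    (ProgMeasurable.stronglyAdapted hπprog (q:ℝ)).add (aux_f_sm ℱ π r hπprog hrprog (q:ℝ))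
  have hMint' : ∀ q : ℚ, Integrable (M q) μ := fun q => (hπint _).add (hMint _)
  have hMnn : ∀ q ω, 0 ≤ M q ω := fun q ω => add_nonneg (hπnn _ _)
    (integral_nonneg fun u => mul_nonneg (hπnn _ _) (hrnn _ _))
  rcases s.eq_empty_or_nonempty with rfl | hne
  · simp only [Finset.notMem_empty, false_and, exists_false, Set.setOf_false,
      measure_empty, ENNReal.toReal_zero, mul_zero]
    exact integral_nonneg fun ω => hπnn 0 ω
  set N : ℝ := ((s.max' hne : ℚ) : ℝ) with hNdef
  have hqN : ∀ q ∈ s, (q:ℝ) ≤ N := fun q hq => by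
    rw [hNdef]; exact_mod_cast s.le_max' q hq
  have hN0 : 0 ≤ N := le_trans (by exact_mod_cast hs _ (s.max'_mem hne)) (hqN _ (s.max'_mem hne))
  -- first entry sets
  set B : ℚ → Set Ω := fun q =>
    {ω | ε ≤ M q ω} ∩ ⋂ q' ∈ s.filter (· < q), {ω | M q' ω < ε} with hB
  have hBmeas : ∀ q ∈ s, MeasurableSet[ℱ (q:ℝ)] (B q) := by
    intro q hq
    refine MeasurableSet.inter ?_ ?_
    · exact @measurableSet_le _ _ _ _ _ (ℱ (q:ℝ)) _ _ _ _ _ measurable_const (hMsm q).measurable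
    · refine Finset.measurableSet_biInter _ fun q' hq' => ?_
      have hlt : q' < q := (Finset.mem_filter.mp hq').2
      have : MeasurableSet[ℱ (q':ℝ)] {ω | M q' ω < ε} :=
        @measurableSet_lt _ _ _ _ _ (ℱ (q':ℝ)) _ _ _ _ _ (hMsm q').measurable measurable_const
      exact ℱ.mono (by exact_mod_cast hlt.le) _ this
  have hBmeas0 : ∀ q ∈ s, MeasurableSet (B q) := fun q hq => ℱ.le _ _ (hBmeas q hq)
  -- disjoint
  have hdisj' : ∀ q1 ∈ s, ∀ q2 ∈ s, q1 < q2 → Disjoint (B q1) (B q2) := by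
    intro q1 h1 q2 h2 hlt
    refine Set.disjoint_left.mpr fun ω hω1 hω2 => ?_
    have h1' : ε ≤ M q1 ω := hω1.1
    have h2' : M q1 ω < ε := by
      have := hω2.2
      simp only [Set.mem_iInter] at this
      exact this q1 (Finset.mem_filter.mpr ⟨h1, hlt⟩)
    exact absurd h1' (not_le.mpr h2')
  have hdisj : (↑s : Set ℚ).PairwiseDisjoint B := by
    intro q1 h1 q2 h2 hne12
    rcases hne12.lt_or_gt with h | h
    · exact hdisj' q1 h1 q2 h2 h
    · exact (hdisj' q2 h2 q1 h1 h).symm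
  -- cover
  have hcover : {ω | ∃ q ∈ s, ε ≤ M q ω} = ⋃ q ∈ s, B q := by
    ext ω
    simp only [Set.mem_setOf_eq, Set.mem_iUnion]
    constructor
    · rintro ⟨q, hq, hεq⟩
      have hne' : (s.filter (fun q' => ε ≤ M q' ω)).Nonempty :=
        ⟨q, Finset.mem_filter.mpr ⟨hq, hεq⟩⟩
      set q0 := (s.filter (fun q' => ε ≤ M q' ω)).min' hne' with hq0
      have hq0mem := Finset.min'_mem _ hne'
      have hq0s : q0 ∈ s := (Finset.mem_filter.mp hq0mem).1
      refine ⟨q0, hq0s, (Finset.mem_filter.mp hq0mem).2, ?_⟩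
      simp only [Set.mem_iInter]
      intro q' hq'
      obtain ⟨hq's, hq'lt⟩ := Finset.mem_filter.mp hq'
      show M q' ω < ε
      by_contra hcon
      push_neg at hcon
      have : q0 ≤ q' := Finset.min'_le _ _ (Finset.mem_filter.mpr ⟨hq's, hcon⟩)
      exact absurd hq'lt (not_lt.mpr this)
    · rintro ⟨q, hq, hωB⟩
      exact ⟨q, hq, hωB.1⟩
  -- per-q estimate
  have hkey : ∀ q ∈ s, ε * (μ (B q)).toReal ≤ ∫ ω in B q, M (s.max' hne) ω ∂μ := by
    intro q hq
    have h1 : ε * (μ (B q)).toReal ≤ ∫ ω in B q, M q ω ∂μ :=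
      setIntegral_ge_of_const_le_real (hBmeas0 q hq) (measure_ne_top μ _)
        (fun ω hω => hω.1) ((hMint' q).integrableOn)
    have h2 : ∫ ω in B q, M q ω ∂μ = ∫ ω in B q, M (s.max' hne) ω ∂μ := by
      have := aux_setint μ ℱ π r hπint hMint hmart (q:ℝ) N
        (by exact_mod_cast hs q hq) (hqN q hq) (B q) (hBmeas q hq)
      exact this.symm
    exact h1.trans_eq h2
  -- sum up
  have hUmeas : MeasurableSet {ω | ∃ q ∈ s, ε ≤ M q ω} := by
    rw [hcover]; exact (Finset.measurableSet_biUnion s hBmeas0)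
  have hμU : μ {ω | ∃ q ∈ s, ε ≤ M q ω} = ∑ q ∈ s, μ (B q) := by
    rw [hcover]; exact measure_biUnion_finset hdisj hBmeas0
  have hsum : ∑ q ∈ s, ∫ ω in B q, M (s.max' hne) ω ∂μ
      = ∫ ω in ⋃ q ∈ s, B q, M (s.max' hne) ω ∂μ :=
    (integral_biUnion_finset s hBmeas0 hdisj fun q hq => (hMint' _).integrableOn).symm
  have hle2 : ∫ ω in ⋃ q ∈ s, B q, M (s.max' hne) ω ∂μ ≤ ∫ ω, M (s.max' hne) ω ∂μ :=
    setIntegral_le_integral (hMint' _) (ae_of_all _ fun ω => hMnn _ ω)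
  have hexp : ∫ ω, M (s.max' hne) ω ∂μ = ∫ ω, π 0 ω ∂μ :=
    aux_exp_const μ ℱ π r hπint hMint hmart N (by exact hN0)
  calc ε * (μ {ω | ∃ q ∈ s, ε ≤ M q ω}).toReal
      = ∑ q ∈ s, ε * (μ (B q)).toReal := by
        rw [hμU, ENNReal.toReal_sum (fun q hq => measure_ne_top μ _), Finset.mul_sum]
    _ ≤ ∑ q ∈ s, ∫ ω in B q, M (s.max' hne) ω ∂μ := Finset.sum_le_sum hkey
    _ = ∫ ω in ⋃ q ∈ s, B q, M (s.max' hne) ω ∂μ := hsum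
    _ ≤ ∫ ω, M (s.max' hne) ω ∂μ := hle2
    _ = ∫ ω, π 0 ω ∂μ := hexp




/-- global joint strong measurability -/
lemma aux_joint_sm (hπprog : ProgMeasurable ℱ π) :
    StronglyMeasurable fun p : ℝ × Ω => π p.1 p.2 := by
  apply stronglyMeasurable_of_tendsto (u := atTop (α := ℕ))
    (f := fun (n : ℕ) (p : ℝ × Ω) => π (min p.1 n) p.2)
  · intro n
    exact (aux_clamp_sm ℱ π hπprog (n : ℝ)).mono (aux_prod_mono (ℱ.le _))
  · rw [tendsto_pi_nhds]
    intro p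
    obtain ⟨N, hN⟩ := exists_nat_ge p.1
    apply tendsto_atTop_of_eventually_const (i₀ := N)
    intro n hn
    have : min p.1 (n:ℝ) = p.1 := min_eq_left (hN.trans (by exact_mod_cast hn))
    rw [this]

lemma aux_lint_meas (hπprog : ProgMeasurable ℱ π) (hrprog : ProgMeasurable ℱ r) (S : Set ℝ) :
    Measurable fun ω => ∫⁻ u in S, ENNReal.ofReal (π u ω * r u ω) := by
  have hj : Measurable fun p : Ω × ℝ => ENNReal.ofReal (π p.2 p.1 * r p.2 p.1) := by
    have h1 := (aux_joint_sm ℱ π hπprog).comp_measurable (measurable_swap : Measurable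
      (Prod.swap : Ω × ℝ → ℝ × Ω))
    have h2 := (aux_joint_sm ℱ r hrprog).comp_measurable (measurable_swap : Measurable
      (Prod.swap : Ω × ℝ → ℝ × Ω))
    exact (h1.mul h2).measurable.ennreal_ofReal
  exact hj.lintegral_prod_right' (ν := volume.restrict S)

lemma aux_path_meas (hπprog : ProgMeasurable ℱ π) (hrprog : ProgMeasurable ℱ r) (ω : Ω) :
    Measurable fun u : ℝ => π u ω * r u ω := by
  have h1 := (aux_joint_sm ℱ π hπprog).measurable.comp
    (measurable_prodMk_right (y := ω) : Measurable fun u : ℝ => (u, ω))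
  have h2 := (aux_joint_sm ℱ r hrprog).measurable.comp
    (measurable_prodMk_right (y := ω) : Measurable fun u : ℝ => (u, ω))
  exact h1.mul h2

lemma aux_f_eq_toReal (hπprog : ProgMeasurable ℱ π) (hrprog : ProgMeasurable ℱ r)
    (hπnn : ∀ t ω, 0 ≤ π t ω) (hrnn : ∀ t ω, 0 ≤ r t ω) (S : Set ℝ) (ω : Ω) :
    (∫ u in S, π u ω * r u ω)
      = (∫⁻ u in S, ENNReal.ofReal (π u ω * r u ω)).toReal := by
  refine integral_eq_lintegral_of_nonneg_ae (ae_of_all _ fun u => mul_nonneg (hπnn _ _) (hrnn _ _))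
    ((aux_path_meas ℱ π r hπprog hrprog ω).aestronglyMeasurable)


lemma aux_sup_bound
    (hπprog : ProgMeasurable ℱ π) (hrprog : ProgMeasurable ℱ r)
    (hπnn : ∀ t ω, 0 ≤ π t ω) (hrnn : ∀ t ω, 0 ≤ r t ω)
    (hπint : ∀ t : ℝ, Integrable (π t) μ)
    (hMint : ∀ t : ℝ, Integrable (fun ω => ∫ s in Set.Ioc (0 : ℝ) t, π s ω * r s ω) μ)
    (hmart : ∀ s t : ℝ, 0 ≤ s → s ≤ t →
      μ[fun ω => π t ω + ∫ u in Set.Ioc (0 : ℝ) t, π u ω * r u ω|ℱ s]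
        =ᵐ[μ] fun ω => π s ω + ∫ u in Set.Ioc (0 : ℝ) s, π u ω * r u ω) :
    ∀ᵐ ω ∂μ, ∃ C : ℝ, ∀ q : ℚ, 0 ≤ q →
      (∫ u in Set.Ioc (0:ℝ) (q:ℝ), π u ω * r u ω) ≤ C := by
  classical
  set M : ℚ → Ω → ℝ := fun q ω => π (q:ℝ) ω + ∫ u in Set.Ioc (0 : ℝ) (q:ℝ), π u ω * r u ω with hM
  set K : ℝ := ∫ ω, π 0 ω ∂μ with hK
  set e : ℕ → ℚ := fun i => |(Denumerable.eqv ℚ).symm i| with he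
  have he0 : ∀ i, (0:ℚ) ≤ e i := fun i => abs_nonneg _
  have hesurj : ∀ q : ℚ, 0 ≤ q → ∃ i, e i = q := fun q hq =>
    ⟨(Denumerable.eqv ℚ) q, by simp [he, abs_of_nonneg hq]⟩
  set U : ℕ → Set Ω := fun n => {ω | ∃ q : ℚ, 0 ≤ q ∧ ((n:ℝ)+1) ≤ M q ω} with hU
  have hUbound : ∀ n : ℕ, μ (U n) ≤ ENNReal.ofReal (K / ((n:ℝ)+1)) := by
    intro n
    set V : ℕ → Set Ω := fun j =>
      {ω | ∃ q ∈ (Finset.range (j+1)).image e, ((n:ℝ)+1) ≤ M q ω} with hV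
    have hVU : U n = ⋃ j, V j := by
      ext ω
      simp only [hU, hV, Set.mem_setOf_eq, Set.mem_iUnion]
      constructor
      · rintro ⟨q, hq0, hq⟩
        obtain ⟨i, rfl⟩ := hesurj q hq0
        exact ⟨i, e i, Finset.mem_image_of_mem e (Finset.self_mem_range_succ i), hq⟩
      · rintro ⟨j, q, hqmem, hq⟩
        obtain ⟨i, _, rfl⟩ := Finset.mem_image.mp hqmem
        exact ⟨e i, he0 i, hq⟩
    have hmono : Monotone V := by
      intro j j' hjj ω
      simp only [hV, Set.mem_setOf_eq]
      rintro ⟨q, hqmem, hq⟩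
      refine ⟨q, ?_, hq⟩
      obtain ⟨i, hi, rfl⟩ := Finset.mem_image.mp hqmem
      exact Finset.mem_image_of_mem e (Finset.mem_range.mpr
        (lt_of_lt_of_le (Finset.mem_range.mp hi) (by omega)))
    rw [hVU, (hmono.directed_le).measure_iUnion]
    refine iSup_le fun j => ?_
    have hmax := aux_maximal μ ℱ π r hπprog hrprog hπnn hrnn hπint hMint hmart
      ((Finset.range (j+1)).image e)
      (fun q hq => by obtain ⟨i, _, rfl⟩ := Finset.mem_image.mp hq; exact he0 i)
      ((n:ℝ)+1) (by positivity)
    have hpos : (0:ℝ) < (n:ℝ)+1 := by positivity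
    have h1 : (μ (V j)).toReal ≤ K / ((n:ℝ)+1) := by
      rw [div_eq_inv_mul, ← hK] at *
      calc (μ (V j)).toReal = (((n:ℝ)+1)⁻¹ * (((n:ℝ)+1) * (μ (V j)).toReal)) := by
            field_simp
        _ ≤ ((n:ℝ)+1)⁻¹ * K := by
            refine mul_le_mul_of_nonneg_left ?_ (by positivity)
            exact hmax
    calc μ (V j) = ENNReal.ofReal ((μ (V j)).toReal) :=
          (ENNReal.ofReal_toReal (measure_ne_top μ _)).symm
      _ ≤ ENNReal.ofReal (K / ((n:ℝ)+1)) := ENNReal.ofReal_le_ofReal h1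
  have hT : μ (⋂ n, U n) = 0 := by
    have htend : Tendsto (fun n : ℕ => ENNReal.ofReal (K / ((n:ℝ)+1))) atTop (nhds 0) := by
      have h1 : Tendsto (fun n : ℕ => K / ((n:ℝ)+1)) atTop (nhds 0) := by
        have := (tendsto_const_div_atTop_nhds_zero_nat K).comp (tendsto_add_atTop_nat 1)
        simpa [Function.comp_def] using this
      simpa using ENNReal.tendsto_ofReal h1
    have hle : ∀ n : ℕ, μ (⋂ m, U m) ≤ ENNReal.ofReal (K / ((n:ℝ)+1)) := fun n =>
      le_trans (measure_mono (Set.iInter_subset U n)) (hUbound n)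
    exact le_antisymm (ge_of_tendsto htend (Eventually.of_forall hle)) zero_le
  rw [ae_iff]
  refine measure_mono_null (fun ω hω => ?_) hT
  simp only [Set.mem_setOf_eq] at hω
  push_neg at hω
  refine Set.mem_iInter.mpr fun n => ?_
  obtain ⟨q, hq0, hql⟩ := hω ((n:ℝ)+1)
  refine ⟨q, hq0, ?_⟩
  have : (∫ u in Set.Ioc (0:ℝ) (q:ℝ), π u ω * r u ω) ≤ M q ω :=
    le_add_of_nonneg_left (hπnn _ _)
  exact le_trans hql.le this


lemma aux_tail_zero
    (hπprog : ProgMeasurable ℱ π) (hrprog : ProgMeasurable ℱ r)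
    (hπnn : ∀ t ω, 0 ≤ π t ω) (hrnn : ∀ t ω, 0 ≤ r t ω)
    (hπint : ∀ t : ℝ, Integrable (π t) μ)
    (hMint : ∀ t : ℝ, Integrable (fun ω => ∫ s in Set.Ioc (0 : ℝ) t, π s ω * r s ω) μ)
    (hmart : ∀ s t : ℝ, 0 ≤ s → s ≤ t →
      μ[fun ω => π t ω + ∫ u in Set.Ioc (0 : ℝ) t, π u ω * r u ω|ℱ s]
        =ᵐ[μ] fun ω => π s ω + ∫ u in Set.Ioc (0 : ℝ) s, π u ω * r u ω)
    (hlim : ∀ t : ℝ, 0 ≤ t →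
      ∀ᵐ ω ∂μ, Tendsto (fun T : ℝ => (μ[π T|ℱ t]) ω) atTop (nhds 0))
    (q : ℝ) (hq : 0 ≤ q) :
    ∀ᵐ ω ∂μ, (∫⁻ u in Set.Ioc (0:ℝ) q, ENNReal.ofReal (π u ω * r u ω)) = ⊤ →
      (∫⁻ u in Set.Ioi q, ENNReal.ofReal (π u ω * r u ω)) = 0 := by
  classical
  set A : Set Ω := {ω | (∫⁻ u in Set.Ioc (0:ℝ) q, ENNReal.ofReal (π u ω * r u ω)) = ⊤} with hA
  have hAm : MeasurableSet[ℱ q] A :=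
    (aux_F_meas ℱ π r hπprog hrprog q) (measurableSet_singleton ⊤)
  have hAm0 : MeasurableSet A := ℱ.le q _ hAm
  -- f vanishes on A from time q on
  have hfvanish : ∀ T : ℝ, q ≤ T → ∀ ω ∈ A, (∫ u in Set.Ioc (0:ℝ) T, π u ω * r u ω) = 0 := by
    intro T hT ω hω
    have hmono : (∫⁻ u in Set.Ioc (0:ℝ) q, ENNReal.ofReal (π u ω * r u ω))
        ≤ ∫⁻ u in Set.Ioc (0:ℝ) T, ENNReal.ofReal (π u ω * r u ω) :=
      lintegral_mono_set (Set.Ioc_subset_Ioc_right hT)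
    have htop : (∫⁻ u in Set.Ioc (0:ℝ) T, ENNReal.ofReal (π u ω * r u ω)) = ⊤ :=
      top_le_iff.mp (hω ▸ hmono)
    rw [aux_f_eq_toReal ℱ π r hπprog hrprog hπnn hrnn, htop, ENNReal.toReal_top]
  -- constancy of ∫_A π T
  have hconst : ∀ T : ℝ, q ≤ T → ∫ ω in A, π T ω ∂μ = ∫ ω in A, π q ω ∂μ := by
    intro T hT
    have h := aux_setint μ ℱ π r hπint hMint hmart q T hq hT A hAm
    have hsplit : ∀ (S : ℝ), (∀ ω ∈ A, (∫ u in Set.Ioc (0:ℝ) S, π u ω * r u ω) = 0) →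
        ∫ ω in A, (π S ω + ∫ u in Set.Ioc (0 : ℝ) S, π u ω * r u ω) ∂μ
          = ∫ ω in A, π S ω ∂μ := by
      intro S hzero
      refine setIntegral_congr_fun hAm0 fun ω hω => ?_
      rw [hzero ω hω, add_zero]
    rw [hsplit T (hfvanish T hT), hsplit q (hfvanish q le_rfl)] at h
    exact h
  -- limit: ∫_A π q = 0
  have hzero : ∫ ω in A, π q ω ∂μ = 0 := by
    have hc : ∀ n : ℕ, ∫ ω in A, (μ[π (n:ℝ)|ℱ q]) ω ∂μ = ∫ ω in A, π (n:ℝ) ω ∂μ := fun n =>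
      setIntegral_condExp (ℱ.le q) (hπint _) hAm
    have hDCT : Tendsto (fun n : ℕ => ∫ ω in A, (μ[π (n:ℝ)|ℱ q]) ω ∂μ) atTop
        (nhds (∫ ω in A, (0:ℝ) ∂μ)) := by
      refine tendsto_integral_filter_of_dominated_convergence
        (bound := fun ω => π q ω + ∫ u in Set.Ioc (0 : ℝ) q, π u ω * r u ω) ?_ ?_ ?_ ?_
      · exact Eventually.of_forall fun n =>
          (stronglyMeasurable_condExp.mono (ℱ.le q)).aestronglyMeasurable.restrict
      · have hev : ∀ᶠ n : ℕ in atTop, q ≤ (n:ℝ) := by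
          obtain ⟨N, hN⟩ := exists_nat_ge q
          exact eventually_atTop.mpr ⟨N, fun n hn => hN.trans (by exact_mod_cast hn)⟩
        refine hev.mono fun n hn => ?_
        have h1 : 0 ≤ᵐ[μ] μ[π (n:ℝ)|ℱ q] := condExp_nonneg (ae_of_all _ fun ω => hπnn _ _)
        have h2 : μ[π (n:ℝ)|ℱ q] ≤ᵐ[μ]
            fun ω => π q ω + ∫ u in Set.Ioc (0 : ℝ) q, π u ω * r u ω := by
          have hmono : μ[π (n:ℝ)|ℱ q] ≤ᵐ[μ]
              μ[fun ω => π (n:ℝ) ω + ∫ u in Set.Ioc (0:ℝ) (n:ℝ), π u ω * r u ω|ℱ q] := by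
            refine condExp_mono (hπint _) ((hπint _).add (hMint _))
              (ae_of_all _ fun ω => le_add_of_nonneg_right ?_)
            exact integral_nonneg fun u => mul_nonneg (hπnn _ _) (hrnn _ _)
          exact hmono.trans (hmart q (n:ℝ) hq hn).le
        refine ae_restrict_of_ae ((h1.and h2).mono fun ω hω => ?_)
        rw [Real.norm_eq_abs, abs_of_nonneg hω.1]
        exact hω.2
      · exact ((hπint q).add (hMint q)).integrableOn
      · have := hlim q hq
        refine ae_restrict_of_ae (this.mono fun ω hω => ?_)
        exact hω.comp tendsto_natCast_atTop_atTop
    have hconst' : ∀ᶠ n : ℕ in atTop, ∫ ω in A, (μ[π (n:ℝ)|ℱ q]) ω ∂μ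
        = ∫ ω in A, π q ω ∂μ := by
      obtain ⟨N, hN⟩ := exists_nat_ge q
      refine eventually_atTop.mpr ⟨N, fun n hn => ?_⟩
      rw [hc n, hconst (n:ℝ) (hN.trans (by exact_mod_cast hn))]
    have h0 : Tendsto (fun _ : ℕ => ∫ ω in A, π q ω ∂μ) atTop
        (nhds (∫ ω in A, π q ω ∂μ)) := tendsto_const_nhds
    have := tendsto_nhds_unique (h0.congr' (hconst'.mono fun n h => h.symm)) hDCT
    simpa using this
  -- π T = 0 a.e. on A for all T ≥ q
  have hπzero : ∀ T : ℝ, q ≤ T → π T =ᵐ[μ.restrict A] 0 := by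
    intro T hT
    have hint : ∫ ω in A, π T ω ∂μ = 0 := by rw [hconst T hT]; exact hzero
    have := (integral_eq_zero_iff_of_nonneg (f := π T) (fun ω => hπnn _ _)
      ((hπint T).integrableOn)).mp hint
    exact this
  -- Fubini
  have hswap : ∫⁻ ω in A, (∫⁻ u in Set.Ioi q, ENNReal.ofReal (π u ω * r u ω)) ∂μ = 0 := by
    have hjm : AEMeasurable
        (Function.uncurry fun (ω : Ω) (u : ℝ) => ENNReal.ofReal (π u ω * r u ω))
        ((μ.restrict A).prod (volume.restrict (Set.Ioi q))) := by
      have h1 := (aux_joint_sm ℱ π hπprog).comp_measurable (measurable_swap : Measurable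
        (Prod.swap : Ω × ℝ → ℝ × Ω))
      have h2 := (aux_joint_sm ℱ r hrprog).comp_measurable (measurable_swap : Measurable
        (Prod.swap : Ω × ℝ → ℝ × Ω))
      exact ((h1.mul h2).measurable.ennreal_ofReal).aemeasurable
    have hs := lintegral_lintegral_swap hjm
    rw [hs]
    have hinner : ∀ u ∈ Set.Ioi q, ∫⁻ ω in A, ENNReal.ofReal (π u ω * r u ω) ∂μ = 0 := by
      intro u hu
      have hz : (fun ω => ENNReal.ofReal (π u ω * r u ω)) =ᵐ[μ.restrict A] 0 :=
        (hπzero u (le_of_lt hu)).mono fun ω hω => by simp [hω]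
      rw [lintegral_congr_ae hz]
      simp
    calc ∫⁻ u in Set.Ioi q, (∫⁻ ω in A, ENNReal.ofReal (π u ω * r u ω) ∂μ)
        = ∫⁻ u in Set.Ioi q, 0 := setLIntegral_congr_fun measurableSet_Ioi
          hinner
      _ = 0 := lintegral_zero
  -- conclude
  have hmeas_tail : Measurable fun ω => ∫⁻ u in Set.Ioi q, ENNReal.ofReal (π u ω * r u ω) :=
    aux_lint_meas ℱ π r hπprog hrprog _
  have htail0 : (fun ω => ∫⁻ u in Set.Ioi q, ENNReal.ofReal (π u ω * r u ω))
      =ᵐ[μ.restrict A] 0 := (lintegral_eq_zero_iff hmeas_tail).mp hswap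
  have := (ae_restrict_iff (μ := μ) (s := A)
    (p := fun ω => (∫⁻ u in Set.Ioi q, ENNReal.ofReal (π u ω * r u ω)) = 0)
    (hmeas_tail (measurableSet_singleton 0))).mp htail0
  exact this


lemma aux_no_explosion
    (hπprog : ProgMeasurable ℱ π) (hrprog : ProgMeasurable ℱ r)
    (hπnn : ∀ t ω, 0 ≤ π t ω) (hrnn : ∀ t ω, 0 ≤ r t ω)
    (hπint : ∀ t : ℝ, Integrable (π t) μ)
    (hMint : ∀ t : ℝ, Integrable (fun ω => ∫ s in Set.Ioc (0 : ℝ) t, π s ω * r s ω) μ)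
    (hmart : ∀ s t : ℝ, 0 ≤ s → s ≤ t →
      μ[fun ω => π t ω + ∫ u in Set.Ioc (0 : ℝ) t, π u ω * r u ω|ℱ s]
        =ᵐ[μ] fun ω => π s ω + ∫ u in Set.Ioc (0 : ℝ) s, π u ω * r u ω)
    (hlim : ∀ t : ℝ, 0 ≤ t →
      ∀ᵐ ω ∂μ, Tendsto (fun T : ℝ => (μ[π T|ℱ t]) ω) atTop (nhds 0)) :
    ∀ᵐ ω ∂μ, ∀ T : ℝ, (∫⁻ u in Set.Ioc (0:ℝ) T, ENNReal.ofReal (π u ω * r u ω)) < ⊤ := by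
  have hsup := aux_sup_bound μ ℱ π r hπprog hrprog hπnn hrnn hπint hMint hmart
  have htails : ∀ᵐ ω ∂μ, ∀ q : ℚ, 0 ≤ q →
      ((∫⁻ u in Set.Ioc (0:ℝ) (q:ℝ), ENNReal.ofReal (π u ω * r u ω)) = ⊤ →
        (∫⁻ u in Set.Ioi (q:ℝ), ENNReal.ofReal (π u ω * r u ω)) = 0) := by
    rw [ae_all_iff]
    intro q
    by_cases hq : (0:ℚ) ≤ q
    · exact (aux_tail_zero μ ℱ π r hπprog hrprog hπnn hrnn hπint hMint hmart hlim
        (q:ℝ) (by exact_mod_cast hq)).mono fun ω h _ => h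
    · exact ae_of_all _ fun ω h => absurd h hq
  filter_upwards [hsup, htails] with ω hC htail
  obtain ⟨C, hC⟩ := hC
  set g : ℝ → ENNReal := fun u => ENNReal.ofReal (π u ω * r u ω) with hg
  have hgm : Measurable g := (aux_path_meas ℱ π r hπprog hrprog ω).ennreal_ofReal
  set ν : Measure ℝ := volume.withDensity g with hν
  have hνap : ∀ S : Set ℝ, MeasurableSet S → ν S = ∫⁻ u in S, g u := fun S hS =>
    withDensity_apply g hS
  -- rewrite goal in terms of ν
  intro T
  rw [← hνap _ measurableSet_Ioc]
  by_contra hTtop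
  rw [not_lt, top_le_iff] at hTtop
  have hT0 : 0 ≤ T := by
    by_contra hT0
    rw [Set.Ioc_eq_empty (fun h => hT0 (le_of_lt (h.trans_le le_rfl)))] at hTtop
    simp at hTtop
  set S : Set ℝ := {x | 0 ≤ x ∧ ν (Set.Ioc 0 x) = ⊤} with hS
  have hSne : S.Nonempty := ⟨T, hT0, hTtop⟩
  have hbdd : BddBelow S := ⟨0, fun x hx => hx.1⟩
  set τ : ℝ := sInf S with hτ
  have hτ0 : 0 ≤ τ := le_csInf hSne fun x hx => hx.1
  have htop : ∀ ρ : ℝ, τ < ρ → ν (Set.Ioc 0 ρ) = ⊤ := by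
    intro ρ hρ
    obtain ⟨x, hxS, hxρ⟩ := (csInf_lt_iff hbdd hSne).mp hρ
    exact top_le_iff.mp (hxS.2 ▸ measure_mono (Set.Ioc_subset_Ioc_right hxρ.le))
  have htailq : ∀ q : ℚ, τ < (q:ℝ) → ν (Set.Ioi (q:ℝ)) = 0 := by
    intro q hq
    have hq0 : (0:ℚ) ≤ q := by exact_mod_cast hτ0.trans hq.le
    have hFq : ν (Set.Ioc 0 (q:ℝ)) = ⊤ := htop _ hq
    rw [hνap _ measurableSet_Ioc] at hFq
    rw [hνap _ measurableSet_Ioi]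
    exact htail q hq0 hFq
  have hIoiτ : ν (Set.Ioi τ) = 0 := by
    have hun : Set.Ioi τ = ⋃ q : {q : ℚ // τ < (q:ℝ)}, Set.Ioi ((q:ℚ):ℝ) := by
      ext x
      simp only [Set.mem_Ioi, Set.mem_iUnion]
      constructor
      · intro hx
        obtain ⟨q, hq1, hq2⟩ := exists_rat_btwn hx
        exact ⟨⟨q, hq1⟩, hq2⟩
      · rintro ⟨⟨q, hq⟩, hx⟩
        exact hq.trans hx
    have hdir : Directed (fun x1 x2 => x1 ⊆ x2)
        (fun q : {q : ℚ // τ < (q:ℝ)} => Set.Ioi ((q:ℚ):ℝ)) := by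
      rintro ⟨q1, h1⟩ ⟨q2, h2⟩
      refine ⟨⟨min q1 q2, ?_⟩, ?_, ?_⟩
      · have : ((min q1 q2 : ℚ):ℝ) = min (q1:ℝ) (q2:ℝ) := by push_cast [Rat.cast_min]; ring_nf
        rw [this]; exact lt_min h1 h2
      · exact Set.Ioi_subset_Ioi (by exact_mod_cast min_le_left q1 q2)
      · exact Set.Ioi_subset_Ioi (by exact_mod_cast min_le_right q1 q2)
    rw [hun, hdir.measure_iUnion]
    simp only [ENNReal.iSup_eq_zero]
    rintro ⟨q, hq⟩
    exact htailq q hq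
  have hτfin : ν (Set.Ioc 0 τ) < ⊤ := by
    rcases eq_or_lt_of_le hτ0 with heq | hlt
    · rw [← heq, Set.Ioc_self]
      simp
    · have hsub : Set.Ioc 0 τ ⊆ Set.Ioo 0 τ ∪ {τ} := by
        intro x hx
        rcases lt_or_eq_of_le hx.2 with h | h
        · exact Or.inl ⟨hx.1, h⟩
        · exact Or.inr (by simp [h])
      have hsing : ν {τ} = 0 :=
        (withDensity_absolutelyContinuous volume g) (Real.volume_singleton)
      have hIoo : ν (Set.Ioo 0 τ) ≤ ENNReal.ofReal C := by
        have hun : Set.Ioo 0 τ = ⋃ q : {q : ℚ // 0 < (q:ℝ) ∧ (q:ℝ) < τ},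
            Set.Ioc 0 ((q:ℚ):ℝ) := by
          ext x
          simp only [Set.mem_Ioo, Set.mem_iUnion, Set.mem_Ioc]
          constructor
          · rintro ⟨hx1, hx2⟩
            obtain ⟨q, hq1, hq2⟩ := exists_rat_btwn hx2
            exact ⟨⟨q, hx1.trans hq1, hq2⟩, hx1, hq1.le⟩
          · rintro ⟨⟨q, hq1, hq2⟩, hx1, hx2⟩
            exact ⟨hx1, lt_of_le_of_lt hx2 hq2⟩
        have hdir : Directed (fun x1 x2 => x1 ⊆ x2)
            (fun q : {q : ℚ // 0 < (q:ℝ) ∧ (q:ℝ) < τ} => Set.Ioc 0 ((q:ℚ):ℝ)) := by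
          rintro ⟨q1, h1⟩ ⟨q2, h2⟩
          refine ⟨⟨max q1 q2, ?_, ?_⟩, ?_, ?_⟩
          · have : ((max q1 q2 : ℚ):ℝ) = max (q1:ℝ) (q2:ℝ) := by push_cast [Rat.cast_max]; ring_nf
            rw [this]; exact lt_max_of_lt_left h1.1
          · have : ((max q1 q2 : ℚ):ℝ) = max (q1:ℝ) (q2:ℝ) := by push_cast [Rat.cast_max]; ring_nf
            rw [this]; exact max_lt h1.2 h2.2
          · exact Set.Ioc_subset_Ioc_right (by exact_mod_cast le_max_left q1 q2)
          · exact Set.Ioc_subset_Ioc_right (by exact_mod_cast le_max_right q1 q2)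
        rw [hun, hdir.measure_iUnion]
        refine iSup_le ?_
        rintro ⟨q, hq1, hq2⟩
        have hqnotS : ν (Set.Ioc 0 ((q:ℚ):ℝ)) ≠ ⊤ := by
          intro hcon
          have : (q:ℝ) ∈ S := ⟨hq1.le, hcon⟩
          exact absurd (csInf_le hbdd this) (not_le.mpr hq2)
        have hfq : (∫ u in Set.Ioc (0:ℝ) ((q:ℚ):ℝ), π u ω * r u ω) ≤ C :=
          hC q (by exact_mod_cast hq1.le)
        have heq2 : ν (Set.Ioc 0 ((q:ℚ):ℝ))
            = ENNReal.ofReal (∫ u in Set.Ioc (0:ℝ) ((q:ℚ):ℝ), π u ω * r u ω) := by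
          rw [aux_f_eq_toReal ℱ π r hπprog hrprog hπnn hrnn, hνap _ measurableSet_Ioc]
          exact (ENNReal.ofReal_toReal ((hνap _ measurableSet_Ioc) ▸ hqnotS)).symm
        rw [heq2]
        exact ENNReal.ofReal_le_ofReal hfq
      calc ν (Set.Ioc 0 τ) ≤ ν (Set.Ioo 0 τ ∪ {τ}) := measure_mono hsub
        _ ≤ ν (Set.Ioo 0 τ) + ν {τ} := measure_union_le _ _
        _ ≤ ENNReal.ofReal C + 0 := by rw [hsing]; exact add_le_add_left hIoo 0
        _ < ⊤ := by simp [ENNReal.ofReal_lt_top]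
  have hfinal : ν (Set.Ioc 0 T) < ⊤ := by
    have hsub : Set.Ioc 0 T ⊆ Set.Ioc 0 τ ∪ Set.Ioi τ := by
      intro x hx
      rcases le_or_gt x τ with h | h
      · exact Or.inl ⟨hx.1, h⟩
      · exact Or.inr h
    calc ν (Set.Ioc 0 T) ≤ ν (Set.Ioc 0 τ) + ν (Set.Ioi τ) :=
          le_trans (measure_mono hsub) (measure_union_le _ _)
      _ = ν (Set.Ioc 0 τ) := by rw [hIoiτ, add_zero]
      _ < ⊤ := hτfin
  rw [hTtop] at hfinal
  exact absurd hfinal (lt_irrefl ⊤)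

lemma aux_glob_bound
    (hπprog : ProgMeasurable ℱ π) (hrprog : ProgMeasurable ℱ r)
    (hπnn : ∀ t ω, 0 ≤ π t ω) (hrnn : ∀ t ω, 0 ≤ r t ω)
    (hπint : ∀ t : ℝ, Integrable (π t) μ)
    (hMint : ∀ t : ℝ, Integrable (fun ω => ∫ s in Set.Ioc (0 : ℝ) t, π s ω * r s ω) μ)
    (hmart : ∀ s t : ℝ, 0 ≤ s → s ≤ t →
      μ[fun ω => π t ω + ∫ u in Set.Ioc (0 : ℝ) t, π u ω * r u ω|ℱ s]
        =ᵐ[μ] fun ω => π s ω + ∫ u in Set.Ioc (0 : ℝ) s, π u ω * r u ω)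
    (hlim : ∀ t : ℝ, 0 ≤ t →
      ∀ᵐ ω ∂μ, Tendsto (fun T : ℝ => (μ[π T|ℱ t]) ω) atTop (nhds 0)) :
    ∫⁻ ω, (∫⁻ u in Set.Ioi (0:ℝ), ENNReal.ofReal (π u ω * r u ω)) ∂μ
      ≤ ENNReal.ofReal (∫ ω, π 0 ω ∂μ) := by
  have hae := aux_no_explosion μ ℱ π r hπprog hrprog hπnn hrnn hπint hMint hmart hlim
  -- pointwise: tail = sup of truncations
  have hsup : ∀ ω, (∫⁻ u in Set.Ioi (0:ℝ), ENNReal.ofReal (π u ω * r u ω))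
      = ⨆ n : ℕ, ∫⁻ u in Set.Ioc (0:ℝ) (n:ℝ), ENNReal.ofReal (π u ω * r u ω) := by
    intro ω
    set g : ℝ → ENNReal := fun u => ENNReal.ofReal (π u ω * r u ω) with hg
    have hgm : Measurable g := (aux_path_meas ℱ π r hπprog hrprog ω).ennreal_ofReal
    set ν : Measure ℝ := volume.withDensity g with hν
    have hνap : ∀ S : Set ℝ, MeasurableSet S → ν S = ∫⁻ u in S, g u := fun S hS =>
      withDensity_apply g hS
    have hun : Set.Ioi (0:ℝ) = ⋃ n : ℕ, Set.Ioc (0:ℝ) (n:ℝ) := by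
      ext x
      simp only [Set.mem_Ioi, Set.mem_iUnion, Set.mem_Ioc]
      constructor
      · intro hx
        obtain ⟨n, hn⟩ := exists_nat_ge x
        exact ⟨n, hx, hn⟩
      · rintro ⟨n, hx, _⟩
        exact hx
    have hmono : Monotone fun n : ℕ => Set.Ioc (0:ℝ) (n:ℝ) := fun a b hab =>
      Set.Ioc_subset_Ioc_right (by exact_mod_cast hab)
    calc (∫⁻ u in Set.Ioi (0:ℝ), g u) = ν (Set.Ioi 0) := (hνap _ measurableSet_Ioi).symm
      _ = ⨆ n : ℕ, ν (Set.Ioc (0:ℝ) (n:ℝ)) := by rw [hun, (hmono.directed_le).measure_iUnion]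
      _ = ⨆ n : ℕ, ∫⁻ u in Set.Ioc (0:ℝ) (n:ℝ), g u := by
          refine iSup_congr fun n => hνap _ measurableSet_Ioc
  have hlint : ∫⁻ ω, (∫⁻ u in Set.Ioi (0:ℝ), ENNReal.ofReal (π u ω * r u ω)) ∂μ
      = ⨆ n : ℕ, ∫⁻ ω, (∫⁻ u in Set.Ioc (0:ℝ) (n:ℝ), ENNReal.ofReal (π u ω * r u ω)) ∂μ := by
    rw [lintegral_congr hsup]
    refine lintegral_iSup (fun n => aux_lint_meas ℱ π r hπprog hrprog _) ?_
    intro a b hab ω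
    exact lintegral_mono_set (Set.Ioc_subset_Ioc_right (by exact_mod_cast hab))
  rw [hlint]
  refine iSup_le fun n => ?_
  -- each truncation
  have heqae : (fun ω => ∫⁻ u in Set.Ioc (0:ℝ) (n:ℝ), ENNReal.ofReal (π u ω * r u ω))
      =ᵐ[μ] fun ω => ENNReal.ofReal (∫ u in Set.Ioc (0:ℝ) (n:ℝ), π u ω * r u ω) := by
    refine hae.mono fun ω hω => ?_
    dsimp only
    rw [aux_f_eq_toReal ℱ π r hπprog hrprog hπnn hrnn, ENNReal.ofReal_toReal (hω (n:ℝ)).ne]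
  rw [lintegral_congr_ae heqae,
    ← ofReal_integral_eq_lintegral_ofReal (hMint (n:ℝ))
      (ae_of_all _ fun ω => integral_nonneg fun u => mul_nonneg (hπnn _ _) (hrnn _ _))]
  refine ENNReal.ofReal_le_ofReal ?_
  have hconst := aux_exp_const μ ℱ π r hπint hMint hmart (n:ℝ) (by positivity)
  rw [integral_add (hπint _) (hMint _)] at hconst
  have hπnn' : 0 ≤ ∫ ω, π (n:ℝ) ω ∂μ := integral_nonneg fun ω => hπnn _ _
  linarith

lemma aux_int_meas (hπprog : ProgMeasurable ℱ π) (hrprog : ProgMeasurable ℱ r) (S : Set ℝ) :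
    StronglyMeasurable fun ω => ∫ u in S, π u ω * r u ω := by
  have h1 := (aux_joint_sm ℱ π hπprog).comp_measurable (measurable_swap : Measurable
    (Prod.swap : Ω × ℝ → ℝ × Ω))
  have h2 := (aux_joint_sm ℱ r hrprog).comp_measurable (measurable_swap : Measurable
    (Prod.swap : Ω × ℝ → ℝ × Ω))
  exact (h1.mul h2).integral_prod_right' (ν := volume.restrict S)

theorem pricing_kernel_conditional_representation'
    (hπprog : ProgMeasurable ℱ π) (hrprog : ProgMeasurable ℱ r)
    (hπnn : ∀ t ω, 0 ≤ π t ω) (hrnn : ∀ t ω, 0 ≤ r t ω)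
    (hπint : ∀ t : ℝ, Integrable (π t) μ)
    (hMint : ∀ t : ℝ, Integrable (fun ω => ∫ s in Set.Ioc (0 : ℝ) t, π s ω * r s ω) μ)
    (hmart : ∀ s t : ℝ, 0 ≤ s → s ≤ t →
      μ[fun ω => π t ω + ∫ u in Set.Ioc (0 : ℝ) t, π u ω * r u ω|ℱ s]
        =ᵐ[μ] fun ω => π s ω + ∫ u in Set.Ioc (0 : ℝ) s, π u ω * r u ω)
    (hlim : ∀ t : ℝ, 0 ≤ t →
      ∀ᵐ ω ∂μ, Tendsto (fun T : ℝ => (μ[π T|ℱ t]) ω) atTop (nhds 0)) :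
    ∀ t : ℝ, 0 ≤ t →
      π t =ᵐ[μ] μ[fun ω => ∫ s in Set.Ioi t, π s ω * r s ω|ℱ t] := by
  intro t ht
  have hρnn : ∀ u ω, (0:ℝ) ≤ π u ω * r u ω := fun u ω => mul_nonneg (hπnn _ _) (hrnn _ _)
  have hglob := aux_glob_bound μ ℱ π r hπprog hrprog hπnn hrnn hπint hMint hmart hlim
  have hfin : ∀ᵐ ω ∂μ, (∫⁻ u in Set.Ioi (0:ℝ), ENNReal.ofReal (π u ω * r u ω)) < ⊤ :=
    ae_lt_top (aux_lint_meas ℱ π r hπprog hrprog _)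
      (lt_of_le_of_lt hglob ENNReal.ofReal_lt_top).ne
  -- tail over Ioi t dominated by Ioi 0
  have hfin' : ∀ᵐ ω ∂μ, (∫⁻ u in Set.Ioi t, ENNReal.ofReal (π u ω * r u ω)) < ⊤ := by
    refine hfin.mono fun ω hω => lt_of_le_of_lt ?_ hω
    exact lintegral_mono_set fun x hx => lt_of_le_of_lt ht hx
  -- integrability of the candidate
  set G : Ω → ℝ := fun ω => ∫ u in Set.Ioi t, π u ω * r u ω with hG
  have hGnn : ∀ ω, 0 ≤ G ω := fun ω => integral_nonneg fun u => hρnn u ω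
  have hGsm : StronglyMeasurable G := aux_int_meas ℱ π r hπprog hrprog _
  have hGint : Integrable G μ := by
    refine ⟨hGsm.aestronglyMeasurable, ?_⟩
    rw [hasFiniteIntegral_iff_norm]
    calc ∫⁻ ω, ENNReal.ofReal ‖G ω‖ ∂μ
        = ∫⁻ ω, ENNReal.ofReal (G ω) ∂μ := by
          refine lintegral_congr fun ω => by rw [Real.norm_of_nonneg (hGnn ω)]
      _ ≤ ∫⁻ ω, (∫⁻ u in Set.Ioi t, ENNReal.ofReal (π u ω * r u ω)) ∂μ := by
          refine lintegral_mono fun ω => ?_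
          rw [hG]
          dsimp only
          rw [aux_f_eq_toReal ℱ π r hπprog hrprog hπnn hrnn]
          exact ENNReal.ofReal_toReal_le
      _ ≤ ∫⁻ ω, (∫⁻ u in Set.Ioi (0:ℝ), ENNReal.ofReal (π u ω * r u ω)) ∂μ := by
          refine lintegral_mono fun ω => lintegral_mono_set fun x hx => lt_of_le_of_lt ht hx
      _ < ⊤ := lt_of_le_of_lt hglob ENNReal.ofReal_lt_top
  -- the set-integral identity
  have hsetid : ∀ A : Set Ω, MeasurableSet[ℱ t] A →
      ∫ ω in A, π t ω ∂μ = ∫ ω in A, G ω ∂μ := by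
    intro A hA
    have hA0 : MeasurableSet A := ℱ.le t _ hA
    -- notation
    set f : ℝ → Ω → ℝ := fun T ω => ∫ u in Set.Ioc (0:ℝ) T, π u ω * r u ω with hf
    set h : ℕ → Ω → ℝ := fun n ω => ∫ u in Set.Ioc t (n:ℝ), π u ω * r u ω with hh
    have hev : ∀ᶠ n : ℕ in atTop, t ≤ (n:ℝ) := by
      obtain ⟨N, hN⟩ := exists_nat_ge t
      exact eventually_atTop.mpr ⟨N, fun n hn => hN.trans (by exact_mod_cast hn)⟩
    -- decomposition a.e.
    have hdecomp : ∀ n : ℕ, t ≤ (n:ℝ) → ∀ᵐ ω ∂μ, f (n:ℝ) ω = f t ω + h n ω := by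
      intro n hn
      refine hfin.mono fun ω hω => ?_
      have hint1 : IntegrableOn (fun u => π u ω * r u ω) (Set.Ioc (0:ℝ) t) := by
        refine ⟨(aux_path_meas ℱ π r hπprog hrprog ω).aestronglyMeasurable.restrict, ?_⟩
        rw [hasFiniteIntegral_iff_norm]
        have : ∫⁻ u in Set.Ioc (0:ℝ) t, ENNReal.ofReal ‖π u ω * r u ω‖
            = ∫⁻ u in Set.Ioc (0:ℝ) t, ENNReal.ofReal (π u ω * r u ω) :=
          lintegral_congr fun u => by rw [Real.norm_of_nonneg (hρnn u ω)]
        rw [this]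
        refine lt_of_le_of_lt (lintegral_mono_set fun x hx => hx.1) hω
      have hint2 : IntegrableOn (fun u => π u ω * r u ω) (Set.Ioc t (n:ℝ)) := by
        refine ⟨(aux_path_meas ℱ π r hπprog hrprog ω).aestronglyMeasurable.restrict, ?_⟩
        rw [hasFiniteIntegral_iff_norm]
        have : ∫⁻ u in Set.Ioc t (n:ℝ), ENNReal.ofReal ‖π u ω * r u ω‖
            = ∫⁻ u in Set.Ioc t (n:ℝ), ENNReal.ofReal (π u ω * r u ω) :=
          lintegral_congr fun u => by rw [Real.norm_of_nonneg (hρnn u ω)]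
        rw [this]
        refine lt_of_le_of_lt (lintegral_mono_set fun x hx => lt_of_le_of_lt ht hx.1) hω
      have hun : Set.Ioc (0:ℝ) t ∪ Set.Ioc t (n:ℝ) = Set.Ioc (0:ℝ) (n:ℝ) :=
        Set.Ioc_union_Ioc_eq_Ioc ht hn
      have := setIntegral_union (Set.Ioc_disjoint_Ioc_of_le le_rfl) measurableSet_Ioc hint1 hint2
      rw [hun] at this
      exact this
    -- numeric identity
    have hident : ∀ n : ℕ, t ≤ (n:ℝ) →
        (∫ ω in A, π (n:ℝ) ω ∂μ) + ∫ ω in A, h n ω ∂μ = ∫ ω in A, π t ω ∂μ := by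
      intro n hn
      have h1 := aux_setint μ ℱ π r hπint hMint hmart t (n:ℝ) ht hn A hA
      have hhint : Integrable (h n) μ := by
        have heq : (fun ω => f (n:ℝ) ω - f t ω) =ᵐ[μ] h n :=
          (hdecomp n hn).mono fun ω hω => by dsimp only; rw [hω]; ring
        exact ((hMint (n:ℝ)).sub (hMint t)).congr heq
      rw [integral_add ((hπint _).integrableOn) ((hMint _).integrableOn),
        integral_add ((hπint _).integrableOn) ((hMint _).integrableOn)] at h1
      have h2 : ∫ ω in A, f (n:ℝ) ω ∂μ = ∫ ω in A, f t ω ∂μ + ∫ ω in A, h n ω ∂μ := by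
        have heq : ∫ ω in A, f (n:ℝ) ω ∂μ = ∫ ω in A, (f t ω + h n ω) ∂μ :=
          setIntegral_congr_ae hA0 ((hdecomp n hn).mono fun ω hω _ => hω)
        rw [heq, integral_add ((hMint t).integrableOn) (hhint.integrableOn)]
      rw [h2] at h1
      linarith
    -- limit of ∫_A π n
    have hπlim : Tendsto (fun n : ℕ => ∫ ω in A, π (n:ℝ) ω ∂μ) atTop (nhds 0) := by
      have hc : ∀ n : ℕ, ∫ ω in A, (μ[π (n:ℝ)|ℱ t]) ω ∂μ = ∫ ω in A, π (n:ℝ) ω ∂μ := fun n =>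
        setIntegral_condExp (ℱ.le t) (hπint _) hA
      have hDCT : Tendsto (fun n : ℕ => ∫ ω in A, (μ[π (n:ℝ)|ℱ t]) ω ∂μ) atTop
          (nhds (∫ ω in A, (0:ℝ) ∂μ)) := by
        refine tendsto_integral_filter_of_dominated_convergence
          (bound := fun ω => π t ω + f t ω) ?_ ?_ ?_ ?_
        · exact Eventually.of_forall fun n =>
            (stronglyMeasurable_condExp.mono (ℱ.le t)).aestronglyMeasurable.restrict
        · refine hev.mono fun n hn => ?_
          have h1 : 0 ≤ᵐ[μ] μ[π (n:ℝ)|ℱ t] := condExp_nonneg (ae_of_all _ fun ω => hπnn _ _)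
          have h2 : μ[π (n:ℝ)|ℱ t] ≤ᵐ[μ] fun ω => π t ω + f t ω := by
            have hmono : μ[π (n:ℝ)|ℱ t] ≤ᵐ[μ]
                μ[fun ω => π (n:ℝ) ω + f (n:ℝ) ω|ℱ t] := by
              refine condExp_mono (hπint _) ((hπint _).add (hMint _))
                (ae_of_all _ fun ω => le_add_of_nonneg_right ?_)
              exact integral_nonneg fun u => hρnn u ω
            exact hmono.trans (hmart t (n:ℝ) ht hn).le
          refine ae_restrict_of_ae ((h1.and h2).mono fun ω hω => ?_)
          rw [Real.norm_eq_abs, abs_of_nonneg hω.1]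
          exact hω.2
        · exact ((hπint t).add (hMint t)).integrableOn
        · refine ae_restrict_of_ae ((hlim t ht).mono fun ω hω => ?_)
          exact hω.comp tendsto_natCast_atTop_atTop
      simp only [integral_zero] at hDCT
      exact hDCT.congr fun n => hc n
    -- limit of ∫_A h n
    have hGlim : Tendsto (fun n : ℕ => ∫ ω in A, h n ω ∂μ) atTop
        (nhds (∫ ω in A, G ω ∂μ)) := by
      refine tendsto_integral_filter_of_dominated_convergence (bound := G) ?_ ?_ ?_ ?_
      · exact Eventually.of_forall fun n =>
          (aux_int_meas ℱ π r hπprog hrprog _).aestronglyMeasurable.restrict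
      · refine Eventually.of_forall fun n => ?_
        refine ae_restrict_of_ae (hfin'.mono fun ω hω => ?_)
        have hnn : 0 ≤ h n ω := integral_nonneg fun u => hρnn u ω
        rw [Real.norm_of_nonneg hnn, hh, hG]
        dsimp only
        rw [aux_f_eq_toReal ℱ π r hπprog hrprog hπnn hrnn,
          aux_f_eq_toReal ℱ π r hπprog hrprog hπnn hrnn]
        refine ENNReal.toReal_mono hω.ne (lintegral_mono_set fun x hx => hx.1)
      · exact hGint.integrableOn
      · refine ae_restrict_of_ae (hfin'.mono fun ω hω => ?_)
        have hLmono : Monotone fun n : ℕ =>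
            ∫⁻ u in Set.Ioc t (n:ℝ), ENNReal.ofReal (π u ω * r u ω) := fun a b hab =>
          lintegral_mono_set (Set.Ioc_subset_Ioc_right (by exact_mod_cast hab))
        have hsupL : (⨆ n : ℕ, ∫⁻ u in Set.Ioc t (n:ℝ), ENNReal.ofReal (π u ω * r u ω))
            = ∫⁻ u in Set.Ioi t, ENNReal.ofReal (π u ω * r u ω) := by
          set g : ℝ → ENNReal := fun u => ENNReal.ofReal (π u ω * r u ω) with hg
          have hgm : Measurable g := (aux_path_meas ℱ π r hπprog hrprog ω).ennreal_ofReal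
          set ν : Measure ℝ := volume.withDensity g with hν
          have hνap : ∀ S : Set ℝ, MeasurableSet S → ν S = ∫⁻ u in S, g u := fun S hS =>
            withDensity_apply g hS
          have hun : Set.Ioi t = ⋃ n : ℕ, Set.Ioc t (n:ℝ) := by
            ext x
            simp only [Set.mem_Ioi, Set.mem_iUnion, Set.mem_Ioc]
            constructor
            · intro hx
              obtain ⟨n, hn⟩ := exists_nat_ge x
              exact ⟨n, hx, hn⟩
            · rintro ⟨n, hx, _⟩
              exact hx
          have hmono : Monotone fun n : ℕ => Set.Ioc t (n:ℝ) := fun a b hab =>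
            Set.Ioc_subset_Ioc_right (by exact_mod_cast hab)
          calc (⨆ n : ℕ, ∫⁻ u in Set.Ioc t (n:ℝ), g u)
              = ⨆ n : ℕ, ν (Set.Ioc t (n:ℝ)) := by
                refine iSup_congr fun n => (hνap _ measurableSet_Ioc).symm
            _ = ν (Set.Ioi t) := by rw [hun, (hmono.directed_le).measure_iUnion]
            _ = ∫⁻ u in Set.Ioi t, g u := hνap _ measurableSet_Ioi
        have htendL : Tendsto (fun n : ℕ =>
            ∫⁻ u in Set.Ioc t (n:ℝ), ENNReal.ofReal (π u ω * r u ω)) atTop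
            (nhds (∫⁻ u in Set.Ioi t, ENNReal.ofReal (π u ω * r u ω))) := by
          rw [← hsupL]
          exact tendsto_atTop_iSup hLmono
        have := (ENNReal.tendsto_toReal hω.ne).comp htendL
        rw [hh, hG]
        dsimp only
        have heq1 : ∀ n : ℕ, (∫ u in Set.Ioc t (n:ℝ), π u ω * r u ω)
            = (∫⁻ u in Set.Ioc t (n:ℝ), ENNReal.ofReal (π u ω * r u ω)).toReal := fun n =>
          aux_f_eq_toReal ℱ π r hπprog hrprog hπnn hrnn _ ω
        have heq2 : (∫ u in Set.Ioi t, π u ω * r u ω)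
            = (∫⁻ u in Set.Ioi t, ENNReal.ofReal (π u ω * r u ω)).toReal :=
          aux_f_eq_toReal ℱ π r hπprog hrprog hπnn hrnn _ ω
        rw [heq2]
        exact this.congr fun n => (heq1 n).symm
    -- combine
    have hcomb : Tendsto (fun n : ℕ => (∫ ω in A, π (n:ℝ) ω ∂μ) + ∫ ω in A, h n ω ∂μ)
        atTop (nhds (0 + ∫ ω in A, G ω ∂μ)) := hπlim.add hGlim
    have hconst : Tendsto (fun _ : ℕ => ∫ ω in A, π t ω ∂μ) atTop
        (nhds (∫ ω in A, π t ω ∂μ)) := tendsto_const_nhds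
    have := tendsto_nhds_unique
      (hconst.congr' (hev.mono fun n hn => (hident n hn).symm)) hcomb
    rw [this, zero_add]
  -- conclude via uniqueness of conditional expectation
  have := ae_eq_condExp_of_forall_setIntegral_eq (ℱ.le t) hGint
    (fun s hs _ => (hπint t).integrableOn)
    (fun s hs _ => hsetid s hs)
    (StronglyMeasurable.aestronglyMeasurable (ProgMeasurable.stronglyAdapted hπprog t))
  exact this
end PricingKernelAux
end PricingKernelAux


/-- Let `(π_t)` and `(r_t)` be nonnegative progressively measurable processes
such that `π_t` and `∫_0^t π_s r_s ds` are integrable for each `t`, the deflated total value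
process `M_t = π_t + ∫_0^t π_s r_s ds` of a unit floating rate note is a martingale, and for
each `t ≥ 0` one has `E_t[π_T] → 0` a.s. as `T → ∞`. Then for each `t ≥ 0`,
`π_t = E_t[∫_t^∞ π_s r_s ds]` almost surely. -/
theorem pricing_kernel_conditional_representation
    {Ω : Type*} {m0 : MeasurableSpace Ω} (μ : Measure Ω) [IsProbabilityMeasure μ]
    (ℱ : Filtration ℝ m0) (π r : ℝ → Ω → ℝ)
    (hπprog : ProgMeasurable ℱ π) (hrprog : ProgMeasurable ℱ r)
    (hπnn : ∀ t ω, 0 ≤ π t ω) (hrnn : ∀ t ω, 0 ≤ r t ω)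
    (hπint : ∀ t : ℝ, Integrable (π t) μ)
    (hMint : ∀ t : ℝ, Integrable (fun ω => ∫ s in Set.Ioc (0 : ℝ) t, π s ω * r s ω) μ)
    (hmart : ∀ s t : ℝ, 0 ≤ s → s ≤ t →
      μ[fun ω => π t ω + ∫ u in Set.Ioc (0 : ℝ) t, π u ω * r u ω|ℱ s]
        =ᵐ[μ] fun ω => π s ω + ∫ u in Set.Ioc (0 : ℝ) s, π u ω * r u ω)
    (hlim : ∀ t : ℝ, 0 ≤ t →
      ∀ᵐ ω ∂μ, Tendsto (fun T : ℝ => (μ[π T|ℱ t]) ω) atTop (nhds 0)) :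
    ∀ t : ℝ, 0 ≤ t →
      π t =ᵐ[μ] μ[fun ω => ∫ s in Set.Ioi t, π s ω * r s ω|ℱ t] := by
  exact PricingKernelAux.pricing_kernel_conditional_representation' μ ℱ π r hπprog hrprog
    hπnn hrnn hπint hMint hmart hlim
end
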